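/- arXiv:2511.12881 — 8 statements merged into one kernel-verified Lean document; each statement's English description precedes it below -/
import Mathlib

section
/- Let λ1, λ2 > 0 and let k, l ≥ 1 be integers. Let X and Y be independent real random variables, where X has the Gamma distribution with shape k and rate λ1 and Y has the Gamma distribution with shape l and rate λ2. Then E[|X − Y|] = Σ_{i=0}^{k−1} C(l−1+i, i) · 2(k − i) · λ1^{i−1} · λ2^{l} / (λ1 + λ2)^{l+i} − k/λ1 + l/λ2. -/
open MeasureTheory ProbabilityTheory

open Real Set Filter Topology Finset

lemma intOn_pow_exp {c : ℝ} (hc : 0 < c) (n : ℕ) :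
    IntegrableOn (fun x : ℝ => x ^ n * exp (-(c * x))) (Ioi 0) := by
  have h := integrableOn_rpow_mul_exp_neg_mul_rpow (p := 1) (s := (n : ℝ)) (b := c)
    (neg_one_lt_zero.trans_le (Nat.cast_nonneg n)) one_pos hc
  refine h.congr_fun (fun x hx => ?_) measurableSet_Ioi
  dsimp only
  rw [Real.rpow_one, Real.rpow_natCast]
  ring_nf

lemma int_pow_exp {c : ℝ} (hc : 0 < c) (n : ℕ) :
    ∫ x in Ioi 0, x ^ n * exp (-(c * x)) = (Nat.factorial n : ℝ) / c ^ (n + 1) := by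
  have h := Real.integral_rpow_mul_exp_neg_mul_Ioi (a := (n : ℝ) + 1) (r := c)
    (by positivity) hc
  rw [show ((n : ℝ) + 1) - 1 = (n : ℝ) by ring] at h
  simp_rw [Real.rpow_natCast] at h
  rw [h, Real.Gamma_nat_eq_factorial]
  rw [show ((n : ℝ) + 1) = ((n + 1 : ℕ) : ℝ) by push_cast; ring, Real.rpow_natCast]
  rw [div_pow, one_pow]
  ring

lemma hasDeriv_S (lam : ℝ) (k : ℕ) (x : ℝ) :
    HasDerivAt (fun y => -(exp (-(lam*y)) * ∑ i ∈ Finset.range (k+1), (lam*y)^i / (Nat.factorial i)))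
      (lam^(k+1) * x^k * exp (-(lam*x)) / (Nat.factorial k)) x := by
  have hlin : HasDerivAt (fun y : ℝ => -(lam*y)) (-lam) x := by
    simpa using ((hasDerivAt_id x).const_mul (-lam))
  have hexp : HasDerivAt (fun y : ℝ => exp (-(lam*y))) (exp (-(lam*x)) * -lam) x := hlin.exp
  have hmul : HasDerivAt (fun y : ℝ => lam*y) lam x := by
    simpa using ((hasDerivAt_id x).const_mul lam)
  induction k with
  | zero =>
    refine (((hexp.mul_const 1).neg).congr_of_eventuallyEq (Eventually.of_forall fun y => ?_)).congr_deriv ?_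
    · simp
    · simp; ring
  | succ m ih =>
    have hpow : HasDerivAt (fun y : ℝ => (lam*y)^(m+1)) (((m:ℝ)+1) * (lam*x)^m * lam) x := by
      simpa using hmul.fun_pow (m+1)
    have hterm : HasDerivAt (fun y : ℝ => -(exp (-(lam*y)) * ((lam*y)^(m+1) / (Nat.factorial (m+1)))))
        (-((exp (-(lam*x)) * -lam) * ((lam*x)^(m+1) / (Nat.factorial (m+1)))
          + exp (-(lam*x)) * ((((m:ℝ)+1) * (lam*x)^m * lam) / (Nat.factorial (m+1))))) x :=
      ((hexp.mul (hpow.div_const _))).neg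
    have h2 := ih.add hterm
    refine (h2.congr_of_eventuallyEq (Eventually.of_forall fun y => ?_)).congr_deriv ?_
    · rw [Finset.sum_range_succ (n := m+1), Pi.add_apply]
      ring
    · have hfac : (Nat.factorial (m+1) : ℝ) = ((m:ℝ)+1) * Nat.factorial m := by
        push_cast [Nat.factorial_succ]; ring
      have hfp : (0:ℝ) < Nat.factorial m := by positivity
      rw [hfac]
      field_simp
      ring

lemma pdf_eq {lam : ℝ} (hlam : 0 < lam) (k : ℕ) {x : ℝ} (hx : 0 ≤ x) :
    gammaPDFReal ((k+1 : ℕ) : ℝ) lam x = lam^(k+1) * x^k * exp (-(lam*x)) / (Nat.factorial k) := by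
  rw [gammaPDFReal, if_pos hx]
  have h1 : ((k+1 : ℕ) : ℝ) = (k : ℝ) + 1 := by push_cast; ring
  rw [h1, Real.Gamma_nat_eq_factorial, show (k:ℝ) + 1 - 1 = ((k:ℕ):ℝ) by ring,
    Real.rpow_natCast, ← Real.rpow_natCast lam (k+1)]
  push_cast
  ring

lemma integrableOn_pdf_aux {lam : ℝ} (hlam : 0 < lam) (k : ℕ) {t : ℝ} (ht : 0 ≤ t) :
    IntegrableOn (fun x : ℝ => lam^(k+1) * x^k * exp (-(lam*x)) / (Nat.factorial k)) (Ioi t) := by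
  have h : IntegrableOn (fun x : ℝ => lam^(k+1) / (Nat.factorial k) * (x ^ k * exp (-(lam*x)))) (Ioi t) :=
    IntegrableOn.mono_set ((intOn_pow_exp hlam k).const_mul (lam^(k+1) / (Nat.factorial k)))
      (Ioi_subset_Ioi ht)
  refine h.congr_fun (fun x _ => by ring) measurableSet_Ioi

lemma tendsto_S (lam : ℝ) (hlam : 0 < lam) (k : ℕ) :
    Tendsto (fun y => -(exp (-(lam*y)) * ∑ i ∈ Finset.range (k+1), (lam*y)^i / (Nat.factorial i)))
      atTop (𝓝 0) := by
  have hmul : Tendsto (fun y : ℝ => lam * y) atTop atTop :=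
    Tendsto.const_mul_atTop hlam tendsto_id
  have h : ∀ i : ℕ, Tendsto (fun y : ℝ => exp (-(lam*y)) * ((lam*y)^i / (Nat.factorial i)))
      atTop (𝓝 0) := by
    intro i
    have h1 : Tendsto (fun z : ℝ => z^i * exp (-z)) atTop (𝓝 0) :=
      tendsto_pow_mul_exp_neg_atTop_nhds_zero i
    have h2 := (h1.comp hmul).div_const (Nat.factorial i : ℝ)
    refine (by simpa [Function.comp] using h2 : Tendsto (fun y : ℝ => (lam*y)^i * exp (-(lam*y)) / (Nat.factorial i)) atTop (𝓝 0)).congr (fun y => by ring)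
  have hsum : Tendsto (fun y : ℝ => ∑ i ∈ Finset.range (k+1),
      exp (-(lam*y)) * ((lam*y)^i / (Nat.factorial i))) atTop (𝓝 0) := by
    have := tendsto_finset_sum (Finset.range (k+1)) (fun i _ => h i)
    simpa using this
  have : Tendsto (fun y : ℝ => -(∑ i ∈ Finset.range (k+1),
      exp (-(lam*y)) * ((lam*y)^i / (Nat.factorial i)))) atTop (𝓝 0) := by
    simpa using hsum.neg
  refine this.congr (fun y => ?_)
  rw [Finset.mul_sum]

lemma survival_eq {lam : ℝ} (hlam : 0 < lam) (k : ℕ) {t : ℝ} (ht : 0 ≤ t) :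
    ∫ x in Ioi t, gammaPDFReal ((k+1 : ℕ) : ℝ) lam x
      = exp (-(lam*t)) * ∑ i ∈ Finset.range (k+1), (lam*t)^i / (Nat.factorial i) := by
  have key := integral_Ioi_of_hasDerivAt_of_tendsto
    (f := fun y => -(exp (-(lam*y)) * ∑ i ∈ Finset.range (k+1), (lam*y)^i / (Nat.factorial i)))
    (f' := fun x => lam^(k+1) * x^k * exp (-(lam*x)) / (Nat.factorial k))
    (a := t) (m := 0)
    ((hasDeriv_S lam k t).continuousAt.continuousWithinAt)
    (fun x _ => hasDeriv_S lam k x)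
    (integrableOn_pdf_aux hlam k ht)
    (tendsto_S lam hlam k)
  rw [setIntegral_congr_fun measurableSet_Ioi
    (fun x (hx : t < x) => pdf_eq hlam k (le_trans ht hx.le)), key]
  ring

lemma survProd_eq (a b : ℝ) (k l : ℕ) (t : ℝ) :
    (exp (-(a*t)) * ∑ i ∈ Finset.range (k+1), (a*t)^i / (Nat.factorial i))
      * (exp (-(b*t)) * ∑ j ∈ Finset.range (l+1), (b*t)^j / (Nat.factorial j))
    = ∑ i ∈ Finset.range (k+1), ∑ j ∈ Finset.range (l+1),
        (a^i * b^j / ((Nat.factorial i) * (Nat.factorial j))) * (t^(i+j) * exp (-((a+b)*t))) := by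
  rw [Finset.mul_sum, Finset.mul_sum, Finset.sum_mul_sum]
  refine Finset.sum_congr rfl fun i _ => Finset.sum_congr rfl fun j _ => ?_
  have he : exp (-(a*t)) * exp (-(b*t)) = exp (-((a+b)*t)) := by
    rw [← Real.exp_add]; ring_nf
  field_simp
  rw [show t * (a+b) = (a+b)*t by ring, show t*b = b*t by ring, ← he]
  ring

lemma survProd_integrable {a b : ℝ} (ha : 0 < a) (hb : 0 < b) (k l : ℕ) :
    IntegrableOn (fun t : ℝ =>
      (exp (-(a*t)) * ∑ i ∈ Finset.range (k+1), (a*t)^i / (Nat.factorial i))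
      * (exp (-(b*t)) * ∑ j ∈ Finset.range (l+1), (b*t)^j / (Nat.factorial j))) (Ioi 0) := by
  have hint : IntegrableOn (fun t : ℝ => ∑ i ∈ Finset.range (k+1), ∑ j ∈ Finset.range (l+1),
      (a^i * b^j / ((Nat.factorial i) * (Nat.factorial j))) * (t^(i+j) * exp (-((a+b)*t)))) (Ioi 0) := by
    refine integrable_finset_sum _ fun i _ => integrable_finset_sum _ fun j _ => ?_
    exact (intOn_pow_exp (by linarith) (i+j)).const_mul _
  exact hint.congr_fun (fun t _ => (survProd_eq a b k l t).symm) measurableSet_Ioi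

lemma survProd_integral {a b : ℝ} (ha : 0 < a) (hb : 0 < b) (k l : ℕ) :
    ∫ t in Ioi 0, (exp (-(a*t)) * ∑ i ∈ Finset.range (k+1), (a*t)^i / (Nat.factorial i))
      * (exp (-(b*t)) * ∑ j ∈ Finset.range (l+1), (b*t)^j / (Nat.factorial j))
    = ∑ i ∈ Finset.range (k+1), ∑ j ∈ Finset.range (l+1),
        ((i+j).choose i : ℝ) * a^i * b^j / (a+b)^(i+j+1) := by
  rw [setIntegral_congr_fun measurableSet_Ioi (fun t _ => survProd_eq a b k l t)]
  rw [integral_finset_sum _ (fun i _ => integrable_finset_sum _ fun j _ =>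
    (intOn_pow_exp (by linarith : (0:ℝ) < a + b) (i+j)).const_mul _)]
  refine Finset.sum_congr rfl fun i _ => ?_
  rw [integral_finset_sum _ (fun j _ => (intOn_pow_exp (by linarith : (0:ℝ) < a + b) (i+j)).const_mul _)]
  refine Finset.sum_congr rfl fun j _ => ?_
  rw [MeasureTheory.integral_const_mul, int_pow_exp (by linarith : (0:ℝ) < a + b) (i+j)]
  have hc : ((i+j).choose i : ℝ) * (Nat.factorial i) * (Nat.factorial j) = Nat.factorial (i+j) := by
    have := Nat.choose_mul_factorial_mul_factorial (Nat.le_add_right i j)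
    rw [Nat.add_sub_cancel_left] at this
    exact_mod_cast congrArg (Nat.cast : ℕ → ℝ) this
  have hfi : (0:ℝ) < Nat.factorial i := by positivity
  have hfj : (0:ℝ) < Nat.factorial j := by positivity
  have hab : (0:ℝ) < a + b := by linarith
  field_simp
  rw [← hc]
  ring

lemma integrableOn_pdf {lam : ℝ} (hlam : 0 < lam) (k : ℕ) {t : ℝ} (ht : 0 ≤ t) :
    IntegrableOn (gammaPDFReal ((k+1 : ℕ) : ℝ) lam) (Ioi t) :=
  (integrableOn_pdf_aux hlam k ht).congr_fun
    (fun x hx => (pdf_eq hlam k (le_trans ht (le_of_lt hx))).symm) measurableSet_Ioi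

lemma gamma_Ioi {lam : ℝ} (hlam : 0 < lam) (k : ℕ) {t : ℝ} (ht : 0 ≤ t) :
    gammaMeasure ((k+1 : ℕ) : ℝ) lam (Ioi t)
      = ENNReal.ofReal (exp (-(lam*t)) * ∑ i ∈ Finset.range (k+1), (lam*t)^i / (Nat.factorial i)) := by
  rw [gammaMeasure, withDensity_apply _ measurableSet_Ioi, ← survival_eq hlam k ht]
  simp only [gammaPDF]
  exact (ofReal_integral_eq_lintegral_ofReal (integrableOn_pdf hlam k ht)
    (ae_of_all _ fun x => gammaPDFReal_nonneg (by positivity) hlam x)).symm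

lemma gamma_ae_nonneg {lam : ℝ} (hlam : 0 < lam) (k : ℕ) :
    ∀ᵐ x ∂(gammaMeasure ((k+1 : ℕ) : ℝ) lam), 0 ≤ x := by
  rw [ae_iff]
  have hset : {x : ℝ | ¬ 0 ≤ x} = Set.Iio 0 := by
    ext x; simp only [Set.mem_setOf_eq, Set.mem_Iio, not_le]
  rw [hset, gammaMeasure, withDensity_apply _ measurableSet_Iio]
  exact lintegral_gammaPDF_of_nonpos le_rfl

lemma gamma_moment {lam : ℝ} (hlam : 0 < lam) (k : ℕ) :
    ∫⁻ x, ENNReal.ofReal x ∂(gammaMeasure ((k+1 : ℕ) : ℝ) lam)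
      = ENNReal.ofReal (((k:ℝ)+1) / lam) := by
  have hmeas : Measurable (gammaPDF ((k+1 : ℕ) : ℝ) lam) :=
    (measurable_gammaPDFReal _ _).ennreal_ofReal
  rw [gammaMeasure, lintegral_withDensity_eq_lintegral_mul _ hmeas ENNReal.measurable_ofReal]
  simp only [Pi.mul_apply]
  have hsplit := lintegral_add_compl
    (f := fun x => gammaPDF ((k+1 : ℕ) : ℝ) lam x * ENNReal.ofReal x)
    (μ := volume) (measurableSet_Ioi (a := (0:ℝ)))
  rw [← hsplit]
  have h0 : ∫⁻ x in (Ioi (0:ℝ))ᶜ, gammaPDF ((k+1 : ℕ) : ℝ) lam x * ENNReal.ofReal x = 0 := by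
    rw [compl_Ioi]
    rw [setLIntegral_congr_fun (g := fun _ => 0) measurableSet_Iic]
    · simp
    · refine fun x (hx : x ≤ 0) => ?_
      dsimp only
      rcases lt_or_eq_of_le hx with h | h
      · rw [gammaPDF_of_neg h, zero_mul]
      · rw [h, ENNReal.ofReal_zero, mul_zero]
  rw [h0, add_zero]
  have h1 : ∫⁻ x in Ioi (0:ℝ), gammaPDF ((k+1 : ℕ) : ℝ) lam x * ENNReal.ofReal x
      = ∫⁻ x in Ioi (0:ℝ), ENNReal.ofReal (gammaPDFReal ((k+1 : ℕ) : ℝ) lam x * x) := by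
    refine setLIntegral_congr_fun measurableSet_Ioi (fun x hx => ?_)
    rw [gammaPDF, ENNReal.ofReal_mul (gammaPDFReal_nonneg (by positivity) hlam x)]
  rw [h1]
  have hint : IntegrableOn (fun x : ℝ => gammaPDFReal ((k+1 : ℕ) : ℝ) lam x * x) (Ioi 0) := by
    have base : IntegrableOn (fun x : ℝ => (lam^(k+1) / (Nat.factorial k)) * (x^(k+1) * exp (-(lam*x)))) (Ioi 0) :=
      (intOn_pow_exp hlam (k+1)).const_mul _
    refine base.congr_fun (fun x hx => ?_) measurableSet_Ioi
    rw [pdf_eq hlam k (le_of_lt hx)]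
    ring
  rw [← ofReal_integral_eq_lintegral_ofReal hint
    (ae_of_all _ fun x => ?_)]
  swap
  · rcases le_or_gt 0 x with h | h
    · exact mul_nonneg (gammaPDFReal_nonneg (by positivity) hlam x) h
    · simp [gammaPDFReal, not_le.mpr h]
  congr 1
  have : ∫ x in Ioi (0:ℝ), gammaPDFReal ((k+1 : ℕ) : ℝ) lam x * x
      = ∫ x in Ioi (0:ℝ), (lam^(k+1) / (Nat.factorial k)) * (x^(k+1) * exp (-(lam*x))) := by
    refine setIntegral_congr_fun measurableSet_Ioi (fun x hx => ?_)
    rw [pdf_eq hlam k (le_of_lt hx)]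
    ring
  rw [this, MeasureTheory.integral_const_mul, int_pow_exp hlam (k+1)]
  have hfk : (0:ℝ) < Nat.factorial k := by positivity
  have hfk1 : (Nat.factorial (k+1) : ℝ) = ((k:ℝ)+1) * Nat.factorial k := by
    push_cast [Nat.factorial_succ]; ring
  rw [hfk1]
  field_simp
  ring

lemma surv_nonneg {lam : ℝ} (hlam : 0 < lam) (k : ℕ) {t : ℝ} (ht : 0 ≤ t) :
    0 ≤ exp (-(lam*t)) * ∑ i ∈ Finset.range (k+1), (lam*t)^i / (Nat.factorial i) := by
  rw [← survival_eq hlam k ht]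
  exact setIntegral_nonneg measurableSet_Ioi
    (fun x _ => gammaPDFReal_nonneg (by positivity) hlam x)

lemma prod_ae_nonneg {a b : ℝ} (ha : 0 < a) (hb : 0 < b) (k l : ℕ) :
    ∀ᵐ p ∂((gammaMeasure ((k+1 : ℕ) : ℝ) a).prod (gammaMeasure ((l+1 : ℕ) : ℝ) b)),
      0 ≤ p.1 ∧ 0 ≤ p.2 := by
  have i1 : IsProbabilityMeasure (gammaMeasure ((k+1 : ℕ) : ℝ) a) :=
    isProbabilityMeasure_gammaMeasure (by positivity) ha
  have i2 : IsProbabilityMeasure (gammaMeasure ((l+1 : ℕ) : ℝ) b) :=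
    isProbabilityMeasure_gammaMeasure (by positivity) hb
  rw [MeasureTheory.Measure.ae_prod_iff_ae_ae (p := fun p : ℝ × ℝ => 0 ≤ p.1 ∧ 0 ≤ p.2)
    (show MeasurableSet {p : ℝ × ℝ | 0 ≤ p.1 ∧ 0 ≤ p.2} from
      (measurableSet_le measurable_const measurable_fst).inter
        (measurableSet_le measurable_const measurable_snd))]
  filter_upwards [gamma_ae_nonneg ha k] with x hx
  filter_upwards [gamma_ae_nonneg hb l] with y hy
  exact ⟨hx, hy⟩

lemma lint_min {a b : ℝ} (ha : 0 < a) (hb : 0 < b) (k l : ℕ) :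
    ∫⁻ p, ENNReal.ofReal (min p.1 p.2)
        ∂((gammaMeasure ((k+1 : ℕ) : ℝ) a).prod (gammaMeasure ((l+1 : ℕ) : ℝ) b))
      = ENNReal.ofReal (∑ i ∈ Finset.range (k+1), ∑ j ∈ Finset.range (l+1),
        ((i+j).choose i : ℝ) * a^i * b^j / (a+b)^(i+j+1)) := by
  have i1 : IsProbabilityMeasure (gammaMeasure ((k+1 : ℕ) : ℝ) a) :=
    isProbabilityMeasure_gammaMeasure (by positivity) ha
  have i2 : IsProbabilityMeasure (gammaMeasure ((l+1 : ℕ) : ℝ) b) :=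
    isProbabilityMeasure_gammaMeasure (by positivity) hb
  have hnn : 0 ≤ᵐ[(gammaMeasure ((k+1 : ℕ) : ℝ) a).prod (gammaMeasure ((l+1 : ℕ) : ℝ) b)]
      (fun p : ℝ × ℝ => min p.1 p.2) := by
    filter_upwards [prod_ae_nonneg ha hb k l] with p hp
    exact le_min hp.1 hp.2
  rw [lintegral_eq_lintegral_meas_lt _ hnn
    ((measurable_fst.min measurable_snd).aemeasurable)]
  have hset : ∀ t : ℝ, {p : ℝ × ℝ | t < min p.1 p.2} = Ioi t ×ˢ Ioi t := by
    intro t; ext p; simp [lt_min_iff]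
  have hmeas : ∀ t ∈ Ioi (0:ℝ),
      ((gammaMeasure ((k+1 : ℕ) : ℝ) a).prod (gammaMeasure ((l+1 : ℕ) : ℝ) b))
        {p : ℝ × ℝ | t < min p.1 p.2}
      = ENNReal.ofReal ((exp (-(a*t)) * ∑ i ∈ Finset.range (k+1), (a*t)^i / (Nat.factorial i))
        * (exp (-(b*t)) * ∑ j ∈ Finset.range (l+1), (b*t)^j / (Nat.factorial j))) := by
    intro t ht
    rw [hset t, Measure.prod_prod, gamma_Ioi ha k (le_of_lt ht), gamma_Ioi hb l (le_of_lt ht),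
      ← ENNReal.ofReal_mul (surv_nonneg ha k (le_of_lt ht))]
  rw [setLIntegral_congr_fun measurableSet_Ioi hmeas]
  rw [← ofReal_integral_eq_lintegral_ofReal (survProd_integrable ha hb k l)
    ((ae_restrict_iff' measurableSet_Ioi).mpr (ae_of_all _ fun t ht =>
      mul_nonneg (surv_nonneg ha k (le_of_lt ht)) (surv_nonneg hb l (le_of_lt ht))))]
  rw [survProd_integral ha hb k l]


lemma alg1 {a b : ℝ} (ha : 0 < a) (hb : 0 < b) (n : ℕ) :
    ∑ j ∈ range (n+1), b^j/(a+b)^(j+1) = (1/a) * (1 - b^(n+1)/(a+b)^(n+1)) := by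
  have hab : (0:ℝ) < a + b := by linarith
  induction n with
  | zero =>
    simp only [zero_add, Finset.sum_range_one, pow_zero, pow_one]
    field_simp
    ring
  | succ m ih =>
    rw [Finset.sum_range_succ, ih]
    field_simp
    ring

lemma alg2 {a b : ℝ} (ha : 0 < a) (hb : 0 < b) (n : ℕ) :
    ∀ K : ℕ, 1/a - ∑ i ∈ range (K+1), ((n+i).choose i : ℝ) * (a^i/a) * b^(n+1)/(a+b)^(n+1+i)
      = ∑ j ∈ range (n+1), ((K+j).choose K : ℝ) * a^K * b^j/(a+b)^(K+j+1) := by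
  have hab : (0:ℝ) < a + b := by linarith
  intro K
  induction K with
  | zero =>
    rw [Finset.sum_range_one]
    have h2 : ∑ j ∈ range (n+1), (((0+j).choose 0 : ℕ) : ℝ) * a^0 * b^j/(a+b)^(0+j+1)
        = ∑ j ∈ range (n+1), b^j/(a+b)^(j+1) := by
      refine Finset.sum_congr rfl fun j _ => by norm_num
    rw [h2, alg1 ha hb n]
    field_simp
    simp
  | succ K ih =>
    rw [Finset.sum_range_succ]
    have key : ∑ j ∈ range (n+1),
        ((((K+1)+j).choose (K+1) : ℝ) * a^(K+1) * b^j/(a+b)^((K+1)+j+1)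
          - ((K+j).choose K : ℝ) * a^K * b^j/(a+b)^(K+j+1))
        = ∑ j ∈ range (n+1),
          ((fun j => ((K+j).choose (K+1) : ℝ) * a^K * b^j / (a+b)^(K+j+1)) j
            - (fun j => ((K+j).choose (K+1) : ℝ) * a^K * b^j / (a+b)^(K+j+1)) (j+1)) := by
      refine Finset.sum_congr rfl fun j _ => ?_
      simp only
      have hp1 : (((K+1)+j).choose (K+1) : ℝ) = ((K+j).choose K : ℝ) + ((K+j).choose (K+1) : ℝ) := by
        have : ((K+j)+1).choose (K+1) = (K+j).choose K + (K+j).choose (K+1) := Nat.choose_succ_succ _ _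
        rw [show (K+1)+j = (K+j)+1 by omega, this]
        push_cast; ring
      have hp2 : ((K+(j+1)).choose (K+1) : ℝ) = ((K+j).choose K : ℝ) + ((K+j).choose (K+1) : ℝ) := by
        have : ((K+j)+1).choose (K+1) = (K+j).choose K + (K+j).choose (K+1) := Nat.choose_succ_succ _ _
        rw [show K+(j+1) = (K+j)+1 by omega, this]
        push_cast; ring
      rw [hp1, hp2, show (K+1)+j+1 = K+j+2 by omega, show K+(j+1)+1 = K+j+2 by omega,
        show (K+j)+1 = K+j+1 by omega]
      field_simp
      ring
    rw [Finset.sum_range_sub'] at key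
    have hT0 : ((K+0).choose (K+1) : ℝ) = 0 := by
      norm_cast
      exact Nat.choose_eq_zero_of_lt (by omega)
    rw [Finset.sum_sub_distrib] at key
    have hend := key
    rw [hT0] at hend
    have : ∑ j ∈ range (n+1), (((K+1)+j).choose (K+1) : ℝ) * a^(K+1) * b^j/(a+b)^((K+1)+j+1)
        = ∑ j ∈ range (n+1), ((K+j).choose K : ℝ) * a^K * b^j/(a+b)^(K+j+1)
          - ((K+(n+1)).choose (K+1) : ℝ) * a^K * b^(n+1) / (a+b)^(K+(n+1)+1) := by
      rw [zero_mul, zero_mul, zero_div] at hend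
      rw [← ih] at hend ⊢
      linarith [hend]
    rw [this, ← ih]
    have hcoef : ((n+(K+1)).choose (K+1) : ℝ) = ((K+(n+1)).choose (K+1) : ℝ) := by
      rw [show n+(K+1) = K+(n+1) by omega]
    rw [hcoef, show n+1+(K+1) = K+(n+1)+1 by omega]
    field_simp
    ring

lemma alg3 (c : ℕ → ℝ) (K : ℕ) :
    ∑ i ∈ range K, ∑ m ∈ range (i+1), c m = ∑ m ∈ range K, ((K:ℝ) - m) * c m := by
  induction K with
  | zero => simp
  | succ K ih =>
    rw [Finset.sum_range_succ, ih, Finset.sum_range_succ (f := c) (n := K),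
      Finset.sum_range_succ (n := K)]
    push_cast
    have h1 : ∑ m ∈ range K, (((K:ℝ)+1) - m) * c m
        = ∑ m ∈ range K, (((K:ℝ) - m) * c m + c m) := by
      refine Finset.sum_congr rfl fun m _ => by ring
    rw [h1, Finset.sum_add_distrib]
    ring

lemma alg_main {a b : ℝ} (ha : 0 < a) (hb : 0 < b) (K n : ℕ) :
    ((K:ℝ)+1)/a + ((n:ℝ)+1)/b
      - 2 * (∑ i ∈ range (K+1), ∑ j ∈ range (n+1), ((i+j).choose i : ℝ) * a^i * b^j / (a+b)^(i+j+1))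
    = (∑ i ∈ range (K+1), ((n+i).choose i : ℝ) * (2*(((K:ℝ)+1) - (i:ℝ))) * a^((i:ℤ)-1) * b^(n+1) / (a+b)^((n+1)+i))
      - ((K:ℝ)+1)/a + ((n:ℝ)+1)/b := by
  have hab : (0:ℝ) < a + b := by linarith
  set c : ℕ → ℝ := fun m => ((n+m).choose m : ℝ) * (a^m/a) * b^(n+1)/(a+b)^(n+1+m) with hc
  have hsum : ∑ i ∈ range (K+1), (1/a - ∑ m ∈ range (i+1), c m)
      = ∑ i ∈ range (K+1), ∑ j ∈ range (n+1), ((i+j).choose i : ℝ) * a^i * b^j / (a+b)^(i+j+1) := by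
    refine Finset.sum_congr rfl fun i _ => ?_
    rw [alg2 ha hb n i]
  rw [Finset.sum_sub_distrib, Finset.sum_const, Finset.card_range, alg3 c (K+1)] at hsum
  have hM : ∑ i ∈ range (K+1), ∑ j ∈ range (n+1), ((i+j).choose i : ℝ) * a^i * b^j / (a+b)^(i+j+1)
      = ((K:ℝ)+1) * (1/a) - ∑ m ∈ range (K+1), (((K+1:ℕ):ℝ) - m) * c m := by
    rw [← hsum]; push_cast; ring
  have hzpow : ∀ m : ℕ, a^((m:ℤ)-1) = a^m/a := by
    intro m
    rw [zpow_sub₀ (ne_of_gt ha), zpow_one, zpow_natCast]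
  have htarget : ∑ i ∈ range (K+1), ((n+i).choose i : ℝ) * (2*(((K:ℝ)+1) - (i:ℝ))) * a^((i:ℤ)-1) * b^(n+1) / (a+b)^((n+1)+i)
      = 2 * ∑ m ∈ range (K+1), (((K+1:ℕ):ℝ) - m) * c m := by
    rw [Finset.mul_sum]
    refine Finset.sum_congr rfl fun i _ => ?_
    rw [hzpow i, hc]
    simp only
    push_cast
    ring
  rw [hM, htarget]
  push_cast
  ring

theorem expected_abs_diff_gamma_intermediate_form
    {Ω : Type*} [MeasurableSpace Ω] (μ : Measure Ω) [IsProbabilityMeasure μ]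
    (lam1 lam2 : ℝ) (hlam1 : 0 < lam1) (hlam2 : 0 < lam2)
    (k l : ℕ) (hk : 1 ≤ k) (hl : 1 ≤ l)
    (X Y : Ω → ℝ) (hX : Measurable X) (hY : Measurable Y)
    (hindep : IndepFun X Y μ)
    (hXlaw : μ.map X = gammaMeasure k lam1)
    (hYlaw : μ.map Y = gammaMeasure l lam2) :
    (∫ ω, |X ω - Y ω| ∂μ) =
      (∑ i ∈ Finset.range k,
        ((l - 1 + i).choose i : ℝ) * (2 * ((k : ℝ) - (i : ℝ))) *
          lam1 ^ ((i : ℤ) - 1) * lam2 ^ l / (lam1 + lam2) ^ (l + i))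
        - (k : ℝ) / lam1 + (l : ℝ) / lam2 := by
  obtain ⟨K, rfl⟩ : ∃ K, k = K + 1 := ⟨k - 1, by omega⟩
  obtain ⟨n, rfl⟩ : ∃ n, l = n + 1 := ⟨l - 1, by omega⟩
  set ν1 := gammaMeasure ((K+1 : ℕ) : ℝ) lam1 with hν1
  set ν2 := gammaMeasure ((n+1 : ℕ) : ℝ) lam2 with hν2
  set ρ := ν1.prod ν2 with hρ
  have i1 : IsProbabilityMeasure ν1 := isProbabilityMeasure_gammaMeasure (by positivity) hlam1
  have i2 : IsProbabilityMeasure ν2 := isProbabilityMeasure_gammaMeasure (by positivity) hlam2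
  -- joint law
  have hmap : μ.map (fun ω => (X ω, Y ω)) = ρ := by
    rw [hρ, ← hXlaw, ← hYlaw]
    exact (ProbabilityTheory.indepFun_iff_map_prod_eq_prod_map_map hX.aemeasurable
      hY.aemeasurable).mp hindep
  -- pass to lintegral
  have hstep1 : (∫ ω, |X ω - Y ω| ∂μ)
      = (∫⁻ p, ENNReal.ofReal |p.1 - p.2| ∂ρ).toReal := by
    rw [integral_eq_lintegral_of_nonneg_ae (f := fun ω => |X ω - Y ω|) (ae_of_all _ fun ω => abs_nonneg _)
      ((hX.sub hY).abs.aestronglyMeasurable)]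
    congr 1
    rw [← hmap, lintegral_map (f := fun p : ℝ × ℝ => ENNReal.ofReal |p.1 - p.2|) ((measurable_fst.sub measurable_snd).abs.ennreal_ofReal)
      (hX.prodMk hY)]
  set A := ∫⁻ p, ENNReal.ofReal |p.1 - p.2| ∂ρ with hA
  set C := ∫⁻ p : ℝ × ℝ, ENNReal.ofReal (min p.1 p.2) ∂ρ with hC
  set B1 := ∫⁻ p : ℝ × ℝ, ENNReal.ofReal p.1 ∂ρ with hB1
  set B2 := ∫⁻ p : ℝ × ℝ, ENNReal.ofReal p.2 ∂ρ with hB2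
  have mf1 : Measurable (fun p : ℝ × ℝ => ENNReal.ofReal |p.1 - p.2|) :=
    (measurable_fst.sub measurable_snd).abs.ennreal_ofReal
  have mf2 : Measurable (fun p : ℝ × ℝ => ENNReal.ofReal (min p.1 p.2)) :=
    (measurable_fst.min measurable_snd).ennreal_ofReal
  -- the key splitting identity
  have hABC : A + C + C = B1 + B2 := by
    have hptwise : ∀ᵐ p ∂ρ, ENNReal.ofReal |p.1 - p.2| + ENNReal.ofReal (min p.1 p.2)
        + ENNReal.ofReal (min p.1 p.2) = ENNReal.ofReal p.1 + ENNReal.ofReal p.2 := by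
      filter_upwards [prod_ae_nonneg hlam1 hlam2 K n] with p hp
      obtain ⟨hx, hy⟩ := hp
      rw [← ENNReal.ofReal_add (abs_nonneg _) (le_min hx hy),
        ← ENNReal.ofReal_add (add_nonneg (abs_nonneg _) (le_min hx hy)) (le_min hx hy),
        ← ENNReal.ofReal_add hx hy]
      congr 1
      rcases le_total p.1 p.2 with h | h
      · rw [abs_of_nonpos (by linarith), min_eq_left h]; ring
      · rw [abs_of_nonneg (by linarith), min_eq_right h]; ring
    calc A + C + C
        = ∫⁻ p, (ENNReal.ofReal |p.1 - p.2| + ENNReal.ofReal (min p.1 p.2)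
            + ENNReal.ofReal (min p.1 p.2)) ∂ρ := by
          rw [lintegral_add_right _ mf2, lintegral_add_right _ mf2]
      _ = ∫⁻ p : ℝ × ℝ, (ENNReal.ofReal p.1 + ENNReal.ofReal p.2) ∂ρ :=
          lintegral_congr_ae hptwise
      _ = B1 + B2 := by
          rw [lintegral_add_right _ measurable_snd.ennreal_ofReal]
  -- marginals
  have hB1v : B1 = ENNReal.ofReal (((K:ℝ)+1) / lam1) := by
    rw [hB1, hρ, MeasureTheory.lintegral_prod _ (measurable_fst.ennreal_ofReal.aemeasurable)]
    simp only [lintegral_const, measure_univ, mul_one]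
    exact gamma_moment hlam1 K
  have hB2v : B2 = ENNReal.ofReal (((n:ℝ)+1) / lam2) := by
    rw [hB2, hρ, MeasureTheory.lintegral_prod _ (measurable_snd.ennreal_ofReal.aemeasurable)]
    simp only [lintegral_const, measure_univ, mul_one]
    exact gamma_moment hlam2 n
  set M := ∑ i ∈ Finset.range (K+1), ∑ j ∈ Finset.range (n+1),
      ((i+j).choose i : ℝ) * lam1^i * lam2^j / (lam1+lam2)^(i+j+1) with hM
  have hMnn : 0 ≤ M := by
    refine Finset.sum_nonneg fun i _ => Finset.sum_nonneg fun j _ => ?_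
    have : (0:ℝ) < lam1 + lam2 := by linarith
    positivity
  have hCv : C = ENNReal.ofReal M := lint_min hlam1 hlam2 K n
  -- finiteness
  have hB1fin : B1 ≠ ⊤ := by rw [hB1v]; exact ENNReal.ofReal_ne_top
  have hB2fin : B2 ≠ ⊤ := by rw [hB2v]; exact ENNReal.ofReal_ne_top
  have hCfin : C ≠ ⊤ := by rw [hCv]; exact ENNReal.ofReal_ne_top
  have hAfin : A ≠ ⊤ := by
    intro htop
    have : A + C + C = ⊤ := by simp [htop]
    rw [hABC] at this
    exact (ENNReal.add_ne_top.mpr ⟨hB1fin, hB2fin⟩) this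
  -- pass to reals
  have htR := congrArg ENNReal.toReal hABC
  rw [ENNReal.toReal_add (ENNReal.add_ne_top.mpr ⟨hAfin, hCfin⟩) hCfin,
    ENNReal.toReal_add hAfin hCfin, ENNReal.toReal_add hB1fin hB2fin,
    hB1v, hB2v, hCv, ENNReal.toReal_ofReal (by positivity),
    ENNReal.toReal_ofReal (by positivity), ENNReal.toReal_ofReal (by positivity)] at htR
  have hAval : A.toReal = ((K:ℝ)+1)/lam1 + ((n:ℝ)+1)/lam2 - 2 * M := by linarith
  rw [hstep1, hAval, hM, alg_main hlam1 hlam2 K n]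
  have hcongr : ∑ i ∈ range (K+1),
        ((n+1-1+i).choose i : ℝ) * (2 * (((K+1:ℕ) : ℝ) - (i : ℝ))) *
          lam1 ^ ((i : ℤ) - 1) * lam2 ^ (n+1) / (lam1 + lam2) ^ ((n+1) + i)
      = ∑ i ∈ range (K+1), ((n+i).choose i : ℝ) * (2*(((K:ℝ)+1) - (i:ℝ)))
          * lam1^((i:ℤ)-1) * lam2^(n+1) / (lam1+lam2)^((n+1)+i) := by
    refine Finset.sum_congr rfl fun i _ => ?_
    rw [show n+1-1+i = n+i by omega]
    push_cast
    ring
  rw [hcongr]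
  push_cast
  ring
end

section
/- Let C > 0 and let k ≥ 1 be an integer. For λ1, λ2 > 0, let E(λ1, λ2) denote E[|X − Y|], where X and Y are independent real random variables, X having the Gamma distribution with shape k and rate λ1 and Y having the Gamma distribution with shape k and rate λ2. Then for all λ1, λ2 > 0 satisfying the harmonic-mean constraint 2·λ1·λ2/(λ1 + λ2) = C, one has E(λ1, λ2) ≥ E(C, C); that is, under the constraint of constant harmonic mean C between the rates, the expected distance is minimized when λ1 = λ2 = C. -/
open MeasureTheory ProbabilityTheory Real Set

/-- The expected absolute distance `E[|X - Y|]` for independent random variables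
`X ~ Gamma(k, lam1)` and `Y ~ Gamma(k, lam2)`; since independence together with the
marginal laws determines the joint law as the product measure, this is the integral
of `|x - y|` against the product of the two gamma measures. -/
noncomputable def gammaExpectedAbsDist (k : ℕ) (lam1 lam2 : ℝ) : ℝ :=
  ∫ p : ℝ × ℝ, |p.1 - p.2| ∂((gammaMeasure k lam1).prod (gammaMeasure k lam2))


-- scaling identity for the pdf
lemma gammaPDF_scale {a r c : ℝ} (ha : 0 < a) (hr : 0 < r) (hc : 0 < c) (x : ℝ) :
    ENNReal.ofReal c⁻¹ * gammaPDF a r (c⁻¹ * x) = gammaPDF a (r / c) x := by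
  rcases le_or_gt 0 x with hx | hx
  · rw [gammaPDF_of_nonneg (by positivity), gammaPDF_of_nonneg hx,
      ← ENNReal.ofReal_mul (by positivity)]
    congr 1
    have h1 : (c⁻¹ * x) ^ (a - 1) = (c ^ (a-1))⁻¹ * x ^ (a-1) := by
      rw [Real.mul_rpow (by positivity) hx, Real.inv_rpow hc.le]
    have h2 : (r / c) ^ a = r ^ a / c ^ a := Real.div_rpow hr.le hc.le a
    have h3 : c ^ (a - 1) = c ^ a / c := by
      rw [Real.rpow_sub hc, Real.rpow_one]
    have h4 : r * (c⁻¹ * x) = r / c * x := by ring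
    rw [h1, h2, h3, h4]
    have hca : (0:ℝ) < c ^ a := Real.rpow_pos_of_pos hc a
    have hg : Real.Gamma a ≠ 0 := (Real.Gamma_pos_of_pos ha).ne'
    field_simp
  · rw [gammaPDF_of_neg hx, gammaPDF_of_neg (by nlinarith [inv_pos.mpr hc]), mul_zero]

lemma gammaMeasure_map {a r c : ℝ} (ha : 0 < a) (hr : 0 < r) (hc : 0 < c) :
    (gammaMeasure a r).map (fun x => c * x) = gammaMeasure a (r / c) := by
  have hmeas : Measurable (gammaPDF a r) :=
    (measurable_gammaPDFReal a r).ennreal_ofReal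
  ext s hs
  rw [Measure.map_apply (measurable_const_mul c) hs, gammaMeasure, gammaMeasure,
    withDensity_apply _ (hs.preimage (measurable_const_mul c)), withDensity_apply _ hs,
    ← lintegral_indicator (hs.preimage (measurable_const_mul c)) _,
    ← lintegral_indicator hs _]
  -- RHS: ∫⁻ x, indicator s (gammaPDF a (r/c)) x
  have hpdf : ∀ x, Set.indicator s (gammaPDF a (r/c)) x
      = ENNReal.ofReal c⁻¹ * Set.indicator s (fun y => gammaPDF a r (c⁻¹ * y)) x := by
    intro x
    by_cases hx : x ∈ s <;> simp [Set.indicator, hx, ← gammaPDF_scale ha hr hc]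
  have hm2 : Measurable fun y : ℝ => gammaPDF a r (c⁻¹ * y) := hmeas.comp (measurable_const_mul c⁻¹)
  simp_rw [hpdf]
  rw [lintegral_const_mul _ (hm2.indicator hs)]
  -- change of variables on the remaining lintegral
  have hvol : (volume : Measure ℝ) = ENNReal.ofReal c • Measure.map (fun y => c * y) volume := by
    rw [Real.map_volume_mul_left hc.ne', smul_smul, ← ENNReal.ofReal_mul hc.le]
    rw [abs_of_pos (inv_pos.mpr hc), mul_inv_cancel₀ hc.ne', ENNReal.ofReal_one, one_smul]
  conv_rhs => rw [hvol]
  rw [lintegral_smul_measure, lintegral_map (hm2.indicator hs) (measurable_const_mul c),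
    smul_eq_mul, ← mul_assoc, ← ENNReal.ofReal_mul (by positivity : (0:ℝ) ≤ c⁻¹),
    inv_mul_cancel₀ hc.ne', ENNReal.ofReal_one, one_mul]
  congr 1
  ext y
  by_cases hy : c * y ∈ s <;>
    simp [Set.indicator, hy, Set.mem_preimage, inv_mul_cancel_left₀ hc.ne']



lemma integrable_id_gamma {a : ℝ} (ha : 0 < a) :
    Integrable (fun x : ℝ => x) (gammaMeasure a 1) := by
  have hmeas : Measurable (gammaPDF a 1) := (measurable_gammaPDFReal a 1).ennreal_ofReal
  rw [gammaMeasure, integrable_withDensity_iff hmeas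
    (ae_of_all _ fun x => ENNReal.ofReal_lt_top)]
  have htr : ∀ x, (gammaPDF a 1 x).toReal = gammaPDFReal a 1 x := fun x =>
    ENNReal.toReal_ofReal (gammaPDFReal_nonneg ha one_pos x)
  simp_rw [htr]
  rw [← integrableOn_univ, ← Set.Iic_union_Ioi (a := (0:ℝ))]
  apply IntegrableOn.union
  · refine (integrableOn_congr_fun ?_ measurableSet_Iic).mpr (integrableOn_zero)
    intro x hx
    have hxle : x ≤ 0 := hx
    rcases lt_or_eq_of_le hxle with hx' | hx'
    · simp [gammaPDFReal, not_le.mpr hx']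
    · simp [hx']
  · have hconv := (Real.GammaIntegral_convergent (show (0:ℝ) < a + 1 by linarith)).const_mul
      (1 / Real.Gamma a)
    refine IntegrableOn.congr_fun hconv ?_ measurableSet_Ioi
    intro x hx
    have hx0 : (0:ℝ) < x := hx
    have hxa : x ^ (a - 1) = x ^ a / x := by rw [Real.rpow_sub hx0, Real.rpow_one]
    simp only [gammaPDFReal, if_pos hx0.le, Real.one_rpow, one_mul, add_sub_cancel_right, hxa]
    field_simp

theorem expected_abs_diff_minimized_at_equal_rates
    (C : ℝ) (hC : 0 < C) (k : ℕ) (hk : 1 ≤ k)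
    (lam1 lam2 : ℝ) (hlam1 : 0 < lam1) (hlam2 : 0 < lam2)
    (hharm : 2 * lam1 * lam2 / (lam1 + lam2) = C) :
    gammaExpectedAbsDist k C C ≤ gammaExpectedAbsDist k lam1 lam2 := by
  have hk0 : (0:ℝ) < (k:ℝ) := by exact_mod_cast Nat.lt_of_lt_of_le Nat.zero_lt_one hk
  set ν : Measure ℝ := gammaMeasure k 1 with hνdef
  haveI hνP : IsProbabilityMeasure ν := isProbabilityMeasure_gammaMeasure hk0 one_pos
  have hmap : ∀ u : ℝ, 0 < u → ν.map (fun x => u⁻¹ * x) = gammaMeasure k u := by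
    intro u hu
    rw [hνdef, gammaMeasure_map hk0 one_pos (inv_pos.mpr hu), one_div, inv_inv]
  -- expected distance as an integral against ν × ν
  have hExp : ∀ u v : ℝ, 0 < u → 0 < v →
      gammaExpectedAbsDist k u v = ∫ p : ℝ × ℝ, |u⁻¹ * p.1 - v⁻¹ * p.2| ∂(ν.prod ν) := by
    intro u v hu hv
    rw [gammaExpectedAbsDist, ← hmap u hu, ← hmap v hv,
      Measure.map_prod_map _ _ (measurable_const_mul u⁻¹) (measurable_const_mul v⁻¹),
      integral_map (f := fun p : ℝ × ℝ => |p.1 - p.2|) ((measurable_const_mul u⁻¹).prodMap (measurable_const_mul v⁻¹)).aemeasurable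
        (Measurable.aestronglyMeasurable (measurable_fst.sub measurable_snd).abs)]
    rfl
  -- integrability
  have hid : Integrable (fun x : ℝ => x) ν := integrable_id_gamma hk0
  have hmapfst : (ν.prod ν).map Prod.fst = ν := by
    rw [Measure.map_fst_prod]; simp
  have hmapsnd : (ν.prod ν).map Prod.snd = ν := by
    rw [Measure.map_snd_prod]; simp
  have h1 : Integrable (fun p : ℝ × ℝ => p.1) (ν.prod ν) := by
    have := hid
    rw [← hmapfst] at this
    exact (integrable_map_measure aestronglyMeasurable_id measurable_fst.aemeasurable).mp this
  have h2 : Integrable (fun p : ℝ × ℝ => p.2) (ν.prod ν) := by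
    have := hid
    rw [← hmapsnd] at this
    exact (integrable_map_measure aestronglyMeasurable_id measurable_snd.aemeasurable).mp this
  have hint : ∀ u v : ℝ, 0 ≤ u → 0 ≤ v →
      Integrable (fun p : ℝ × ℝ => |u * p.1 - v * p.2|) (ν.prod ν) := by
    intro u v hu hv
    refine Integrable.mono ((((h1.abs.const_mul u)).add (h2.abs.const_mul v)))
      (Measurable.aestronglyMeasurable
        (((measurable_fst.const_mul u).sub (measurable_snd.const_mul v)).abs))
      (ae_of_all _ fun p => ?_)
    have hb : |u * p.1 - v * p.2| ≤ u * |p.1| + v * |p.2| := by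
      calc |u * p.1 - v * p.2| ≤ |u * p.1| + |v * p.2| := abs_sub _ _
        _ = u * |p.1| + v * |p.2| := by
            rw [abs_mul, abs_mul, abs_of_nonneg hu, abs_of_nonneg hv]
    have hnn : (0:ℝ) ≤ u * |p.1| + v * |p.2| := by positivity
    simpa [Real.norm_eq_abs, abs_of_nonneg hnn, abs_abs] using hb
  set a := lam1⁻¹ with hadef
  set b := lam2⁻¹ with hbdef
  have ha : 0 < a := inv_pos.mpr hlam1
  have hb : 0 < b := inv_pos.mpr hlam2
  have hF : Integrable (fun p : ℝ × ℝ => |a * p.1 - b * p.2|) (ν.prod ν) := hint a b ha.le hb.le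
  have hF' : Integrable (fun p : ℝ × ℝ => |a * p.2 - b * p.1|) (ν.prod ν) :=
    (hint b a hb.le ha.le).congr (ae_of_all _ fun p => abs_sub_comm (b * p.1) (a * p.2))
  -- swapping the coordinates leaves the integral unchanged
  have hswap : ∫ p : ℝ × ℝ, |a * p.1 - b * p.2| ∂(ν.prod ν)
      = ∫ p : ℝ × ℝ, |a * p.2 - b * p.1| ∂(ν.prod ν) := by
    conv_lhs => rw [← Measure.prod_swap]
    rw [integral_map measurable_swap.aemeasurable]
    · rfl
    · rw [Measure.prod_swap]
      exact Measurable.aestronglyMeasurable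
        ((measurable_fst.const_mul a).sub (measurable_snd.const_mul b)).abs
  -- harmonic mean relation
  have hlsum : 0 < lam1 + lam2 := by linarith
  have hab : C⁻¹ = (a + b) / 2 := by
    rw [← hharm, hadef, hbdef]
    field_simp
    ring
  -- pointwise inequality
  have hpt : ∀ p : ℝ × ℝ, C⁻¹ * |p.1 - p.2|
      ≤ (|a * p.1 - b * p.2| + |a * p.2 - b * p.1|) / 2 := by
    intro p
    have key : (a + b) * |p.1 - p.2| ≤ |a * p.1 - b * p.2| + |a * p.2 - b * p.1| := by
      have h1 := abs_add_le (a * p.1 - b * p.2) (b * p.1 - a * p.2)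
      have h2 : |(a * p.1 - b * p.2) + (b * p.1 - a * p.2)| = (a + b) * |p.1 - p.2| := by
        have : (a * p.1 - b * p.2) + (b * p.1 - a * p.2) = (a + b) * (p.1 - p.2) := by ring
        rw [this, abs_mul, abs_of_nonneg (by positivity : (0:ℝ) ≤ a + b)]
      have h3 : |b * p.1 - a * p.2| = |a * p.2 - b * p.1| := abs_sub_comm _ _
      linarith
    rw [hab]
    linarith
  calc gammaExpectedAbsDist k C C
      = ∫ p : ℝ × ℝ, C⁻¹ * |p.1 - p.2| ∂(ν.prod ν) := by
        rw [hExp C C hC hC]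
        congr 1
        funext p
        rw [← mul_sub, abs_mul, abs_of_nonneg (inv_nonneg.mpr hC.le)]
    _ ≤ ∫ p : ℝ × ℝ, (|a * p.1 - b * p.2| + |a * p.2 - b * p.1|) / 2 ∂(ν.prod ν) :=
        integral_mono_of_nonneg (ae_of_all _ fun p => by positivity)
          ((hF.add hF').div_const 2) (ae_of_all _ hpt)
    _ = ((∫ p : ℝ × ℝ, |a * p.1 - b * p.2| ∂(ν.prod ν))
          + ∫ p : ℝ × ℝ, |a * p.2 - b * p.1| ∂(ν.prod ν)) / 2 := by
        rw [integral_div, integral_add hF hF']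
    _ = ∫ p : ℝ × ℝ, |a * p.1 - b * p.2| ∂(ν.prod ν) := by rw [← hswap]; ring
    _ = gammaExpectedAbsDist k lam1 lam2 := (hExp lam1 lam2 hlam1 hlam2).symm
end

section
/- Let 0 < λ1 < λ2. For each integer k ≥ 1, let X_k and Y_k be independent real random variables, where X_k has the Gamma distribution with shape k and rate λ1 and Y_k has the Gamma distribution with shape k and rate λ2, and set s_k = |X_k − Y_k|/k. Then lim_{k→∞} E[s_k] = 1/λ1 − 1/λ2. -/
open MeasureTheory ProbabilityTheory Filter Real Set
open scoped ENNReal NNReal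

namespace GammaAuxZZZ

lemma integral_gammaMeasure_eq {a r : ℝ} (ha : 0 < a) (hr : 0 < r) (g : ℝ → ℝ) :
    ∫ x, g x ∂(gammaMeasure a r) = ∫ x, gammaPDFReal a r x * g x := by
  rw [gammaMeasure]
  have h1 : gammaPDF a r = fun x => ((Real.toNNReal (gammaPDFReal a r x) : ℝ≥0) : ℝ≥0∞) := by
    funext x; rfl
  rw [h1, integral_withDensity_eq_integral_smul ((measurable_gammaPDFReal a r).real_toNNReal) g]
  congr 1
  funext x
  rw [NNReal.smul_def, smul_eq_mul, Real.coe_toNNReal _ (gammaPDFReal_nonneg ha hr x)]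

lemma integrable_gammaMeasure_iff {a r : ℝ} (ha : 0 < a) (hr : 0 < r) (g : ℝ → ℝ) :
    Integrable g (gammaMeasure a r) ↔ Integrable (fun x => gammaPDFReal a r x * g x) := by
  rw [gammaMeasure]
  have h1 : gammaPDF a r = fun x => ((Real.toNNReal (gammaPDFReal a r x) : ℝ≥0) : ℝ≥0∞) := by
    funext x; rfl
  rw [h1, integrable_withDensity_iff_integrable_smul ((measurable_gammaPDFReal a r).real_toNNReal)]
  constructor <;> intro h <;> refine h.congr (Filter.Eventually.of_forall fun x => ?_) <;>
    simp only [NNReal.smul_def, smul_eq_mul, Real.coe_toNNReal _ (gammaPDFReal_nonneg ha hr x)]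

lemma integral_pdf_mul_eq_Ioi (a r : ℝ) (g : ℝ → ℝ) :
    ∫ x, gammaPDFReal a r x * g x = ∫ x in Ioi (0:ℝ), gammaPDFReal a r x * g x := by
  rw [← integral_Ici_eq_integral_Ioi]
  refine (setIntegral_eq_integral_of_forall_compl_eq_zero fun x hx => ?_).symm
  have hx' : x < 0 := by simpa using hx
  simp [gammaPDFReal, not_le.mpr hx']


lemma pdf_mul_pow_eq {a r : ℝ} (ha : 0 < a) (hr : 0 < r) (n : ℕ) :
    ∀ x ∈ Ioi (0:ℝ), gammaPDFReal a r x * x ^ n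
      = (r ^ a / Real.Gamma a) * (x ^ (a + n - 1) * Real.exp (-(r * x))) := by
  intro x hx
  have hx0 : (0:ℝ) < x := hx
  rw [gammaPDFReal, if_pos hx0.le]
  have h2 : x ^ (a + (n:ℝ) - 1) = x ^ (a - 1) * x ^ (n:ℝ) := by
    rw [← Real.rpow_add hx0]; ring_nf
  rw [h2, Real.rpow_natCast]
  ring

lemma moment {a r : ℝ} (ha : 0 < a) (hr : 0 < r) (n : ℕ) :
    ∫ x, x ^ n ∂(gammaMeasure a r) = Real.Gamma (a + n) / (Real.Gamma a * r ^ n) := by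
  rw [integral_gammaMeasure_eq ha hr, integral_pdf_mul_eq_Ioi,
    setIntegral_congr_fun measurableSet_Ioi (pdf_mul_pow_eq ha hr n), integral_const_mul,
    show a + (n:ℝ) - 1 = (a + n) - 1 by ring,
    integral_rpow_mul_exp_neg_mul_Ioi (by positivity) hr]
  rw [div_rpow zero_le_one hr.le, one_rpow]
  have h3 : r ^ a * (1 / r ^ (a + (n:ℝ))) = 1 / (r ^ (n:ℕ) : ℝ) := by
    rw [one_div, ← Real.rpow_neg hr.le, ← Real.rpow_add hr, ← Real.rpow_natCast r n, one_div,
      ← Real.rpow_neg hr.le]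
    norm_num
  rw [show r ^ a / Real.Gamma a * (1 / r ^ (a + (n:ℝ)) * Real.Gamma (a + (n:ℝ)))
      = (r ^ a * (1 / r ^ (a + (n:ℝ)))) * (Real.Gamma (a + (n:ℝ)) / Real.Gamma a) from by ring,
    h3]
  rw [div_mul_div_comm, one_mul, mul_comm (r ^ n : ℝ)]

lemma integrable_pow_gamma {a r : ℝ} (ha : 0 < a) (hr : 0 < r) (n : ℕ) :
    Integrable (fun x => x ^ n) (gammaMeasure a r) := by
  rw [integrable_gammaMeasure_iff ha hr]
  have hIoi : IntegrableOn (fun x => gammaPDFReal a r x * x ^ n) (Ioi (0:ℝ)) := by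
    have h0 : IntegrableOn (fun x : ℝ => x ^ (a + n - 1) * Real.exp (-r * x ^ (1:ℝ))) (Ioi 0) :=
      integrableOn_rpow_mul_exp_neg_mul_rpow (by push_cast; linarith) one_pos hr
    have h1 : IntegrableOn
        (fun x : ℝ => (r ^ a / Real.Gamma a) * (x ^ (a + n - 1) * Real.exp (-r * x ^ (1:ℝ))))
        (Ioi 0) := h0.const_mul _
    refine h1.congr_fun (fun x hx => ?_) measurableSet_Ioi
    beta_reduce
    rw [Real.rpow_one, neg_mul, ← pdf_mul_pow_eq ha hr n x hx]
  rw [← integrableOn_Ici_iff_integrableOn_Ioi] at hIoi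
  have hzero : IntegrableOn (fun x => gammaPDFReal a r x * x ^ n) (Iio (0:ℝ)) := by
    refine (integrableOn_zero).congr_fun (fun x hx => ?_) measurableSet_Iio
    have hx' : x < 0 := hx
    simp [gammaPDFReal, not_le.mpr hx']
  have := hzero.union hIoi
  rwa [Iio_union_Ici, integrableOn_univ] at this


lemma mean_gamma {k : ℕ} (hk : 1 ≤ k) {r : ℝ} (hr : 0 < r) :
    ∫ x, x ∂(gammaMeasure k r) = k / r := by
  have hk0 : (0:ℝ) < k := by exact_mod_cast hk
  have h := moment hk0 hr 1
  simp only [pow_one, Nat.cast_one] at h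
  rw [h, Real.Gamma_add_one hk0.ne']
  field_simp

lemma sq_moment_gamma {k : ℕ} (hk : 1 ≤ k) {r : ℝ} (hr : 0 < r) :
    ∫ x, x ^ 2 ∂(gammaMeasure k r) = k * (k + 1) / r ^ 2 := by
  have hk0 : (0:ℝ) < k := by exact_mod_cast hk
  have h := moment hk0 hr 2
  rw [h, show ((k:ℝ) + (2:ℕ)) = ((k:ℝ) + 1) + 1 by push_cast; ring,
    Real.Gamma_add_one (by positivity), show ((k:ℝ) + 1) = (k:ℝ) + 1 from rfl]
  rw [show ((k:ℝ)) + 1 = (k:ℝ) + 1 from rfl]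
  rw [show Real.Gamma ((k:ℝ) + 1) = k * Real.Gamma k from Real.Gamma_add_one hk0.ne']
  have hg : Real.Gamma (k:ℝ) ≠ 0 := (Real.Gamma_pos_of_pos hk0).ne'
  field_simp

lemma integrable_sq_dev {k : ℕ} (hk : 1 ≤ k) {r : ℝ} (hr : 0 < r) :
    Integrable (fun x : ℝ => (x / k - 1 / r) ^ 2) (gammaMeasure k r) := by
  have hk0 : (0:ℝ) < k := by exact_mod_cast hk
  have : IsProbabilityMeasure (gammaMeasure (k:ℝ) r) := isProbabilityMeasure_gammaMeasure hk0 hr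
  have h2 := integrable_pow_gamma hk0 hr 2
  have h1 := integrable_pow_gamma hk0 hr 1
  simp only [pow_one] at h1
  have := ((h2.const_mul (1/(k:ℝ)^2)).sub (h1.const_mul (2/(k*r)))).add (integrable_const (1/r^2))
  refine this.congr (Filter.Eventually.of_forall fun x => ?_)
  simp only [Pi.add_apply, Pi.sub_apply]
  field_simp
  ring

lemma integral_sq_dev {k : ℕ} (hk : 1 ≤ k) {r : ℝ} (hr : 0 < r) :
    ∫ x, (x / k - 1 / r) ^ 2 ∂(gammaMeasure k r) = 1 / (k * r ^ 2) := by
  have hk0 : (0:ℝ) < k := by exact_mod_cast hk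
  have : IsProbabilityMeasure (gammaMeasure (k:ℝ) r) := isProbabilityMeasure_gammaMeasure hk0 hr
  have h2 := integrable_pow_gamma hk0 hr 2
  have h1 := integrable_pow_gamma hk0 hr 1
  simp only [pow_one] at h1
  have heq : (fun x : ℝ => (x / k - 1 / r) ^ 2)
      = fun x => ((1/(k:ℝ)^2) * x ^ 2 - (2/(k*r)) * x) + 1/r^2 := by
    funext x; field_simp; ring
  have hA : Integrable (fun x : ℝ => 1/(k:ℝ)^2 * x ^ 2 - 2/((k:ℝ)*r) * x) (gammaMeasure k r) :=
    (h2.const_mul _).sub (h1.const_mul _)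
  rw [heq]
  rw [integral_add hA (integrable_const _),
    integral_sub (h2.const_mul _) (h1.const_mul _), integral_const_mul, integral_const_mul,
    sq_moment_gamma hk hr, mean_gamma hk hr, integral_const, probReal_univ,
    one_smul]
  field_simp
  ring


lemma abs_dev_integral_le {k : ℕ} (hk : 1 ≤ k) {r : ℝ} (hr : 0 < r) :
    ∫ x, |x / k - 1 / r| ∂(gammaMeasure k r) ≤ 1 / (r * Real.sqrt k) := by
  have hk0 : (0:ℝ) < k := by exact_mod_cast hk
  have : IsProbabilityMeasure (gammaMeasure (k:ℝ) r) := isProbabilityMeasure_gammaMeasure hk0 hr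
  have hmeas : AEStronglyMeasurable (fun x : ℝ => x / k - 1 / r) (gammaMeasure (k:ℝ) r) :=
    ((measurable_id.div_const _).sub_const _).aestronglyMeasurable
  have hmem : MemLp (fun x : ℝ => x / k - 1 / r) 2 (gammaMeasure (k:ℝ) r) :=
    (memLp_two_iff_integrable_sq hmeas).2 (integrable_sq_dev hk hr)
  have hmem2 : MemLp (fun x : ℝ => |x / k - 1 / r|) (ENNReal.ofReal 2) (gammaMeasure (k:ℝ) r) := by
    rw [show (ENNReal.ofReal 2) = 2 by norm_num]
    exact hmem.abs
  have hconst : MemLp (fun _ : ℝ => (1:ℝ)) (ENNReal.ofReal 2) (gammaMeasure (k:ℝ) r) :=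
    memLp_const 1
  have hpq : Real.HolderConjugate 2 2 := ⟨by norm_num, by norm_num, by norm_num⟩
  have h := integral_mul_le_Lp_mul_Lq_of_nonneg hpq
    (Filter.Eventually.of_forall fun x => abs_nonneg _)
    (Filter.Eventually.of_forall fun _ => zero_le_one) hmem2 hconst
  simp only [mul_one, Real.one_rpow] at h
  have e1 : (fun x : ℝ => |x / k - 1 / r| ^ (2:ℝ)) = fun x : ℝ => (x / k - 1 / r) ^ 2 := by
    funext x
    rw [show (2:ℝ) = ((2:ℕ):ℝ) by norm_num, Real.rpow_natCast, sq_abs]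
  rw [e1, integral_sq_dev hk hr, integral_const, probReal_univ, one_smul,
    Real.one_rpow, mul_one] at h
  refine h.trans (le_of_eq ?_)
  rw [← Real.sqrt_eq_rpow, one_div, Real.sqrt_inv, Real.sqrt_mul hk0.le, Real.sqrt_sq hr.le,
    one_div, mul_comm]

end GammaAuxZZZ

open GammaAuxZZZ in
theorem tendsto_expected_normalized_abs_diff
    {Ω : Type*} [MeasurableSpace Ω] (μ : Measure Ω) [IsProbabilityMeasure μ]
    (lam1 lam2 : ℝ) (hlam1 : 0 < lam1) (hlam12 : lam1 < lam2)
    (X Y : ℕ → Ω → ℝ)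
    (hX : ∀ k, 1 ≤ k → Measurable (X k)) (hY : ∀ k, 1 ≤ k → Measurable (Y k))
    (hindep : ∀ k, 1 ≤ k → IndepFun (X k) (Y k) μ)
    (hXlaw : ∀ k, 1 ≤ k → μ.map (X k) = gammaMeasure k lam1)
    (hYlaw : ∀ k, 1 ≤ k → μ.map (Y k) = gammaMeasure k lam2) :
    Tendsto (fun k : ℕ => ∫ ω, |X k ω - Y k ω| / k ∂μ) atTop
      (nhds (1 / lam1 - 1 / lam2)) := by
  have hlam2 : 0 < lam2 := hlam1.trans hlam12
  set c : ℝ := 1 / lam1 - 1 / lam2 with hc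
  have hc0 : 0 ≤ c := by
    have := one_div_le_one_div_of_le hlam1 hlam12.le
    simp only [hc]; linarith
  have key : ∀ k : ℕ, 1 ≤ k →
      |(∫ ω, |X k ω - Y k ω| / k ∂μ) - c|
        ≤ 1/(lam1 * Real.sqrt k) + 1/(lam2 * Real.sqrt k) := by
    intro k hk
    have hk0 : (0:ℝ) < k := by exact_mod_cast hk
    have hXm := hX k hk; have hYm := hY k hk
    have hXi : Integrable (X k) μ := by
      have h0 : Integrable (fun x : ℝ => x) (μ.map (X k)) := by
        rw [hXlaw k hk]
        simpa using integrable_pow_gamma (a := (k:ℝ)) hk0 hlam1 1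
      have := (integrable_map_measure aestronglyMeasurable_id hXm.aemeasurable).1 h0
      simpa [Function.comp] using this
    have hYi : Integrable (Y k) μ := by
      have h0 : Integrable (fun x : ℝ => x) (μ.map (Y k)) := by
        rw [hYlaw k hk]
        simpa using integrable_pow_gamma (a := (k:ℝ)) hk0 hlam2 1
      have := (integrable_map_measure aestronglyMeasurable_id hYm.aemeasurable).1 h0
      simpa [Function.comp] using this
    have hXdev : Integrable (fun ω => |X k ω / k - 1 / lam1|) μ :=
      ((hXi.div_const k).sub (integrable_const _)).abs
    have hYdev : Integrable (fun ω => |Y k ω / k - 1 / lam2|) μ :=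
      ((hYi.div_const k).sub (integrable_const _)).abs
    have hXint : ∫ ω, |X k ω / k - 1 / lam1| ∂μ ≤ 1/(lam1 * Real.sqrt k) := by
      have hgm : AEStronglyMeasurable (fun x : ℝ => |x / k - 1 / lam1|) (μ.map (X k)) :=
        (((measurable_id.div_const _).sub_const _).abs).aestronglyMeasurable
      have hmap := integral_map (φ := X k) (f := fun x : ℝ => |x / k - 1 / lam1|)
        hXm.aemeasurable hgm
      rw [← hmap, hXlaw k hk]
      exact abs_dev_integral_le hk hlam1
    have hYint : ∫ ω, |Y k ω / k - 1 / lam2| ∂μ ≤ 1/(lam2 * Real.sqrt k) := by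
      have hgm : AEStronglyMeasurable (fun x : ℝ => |x / k - 1 / lam2|) (μ.map (Y k)) :=
        (((measurable_id.div_const _).sub_const _).abs).aestronglyMeasurable
      have hmap := integral_map (φ := Y k) (f := fun x : ℝ => |x / k - 1 / lam2|)
        hYm.aemeasurable hgm
      rw [← hmap, hYlaw k hk]
      exact abs_dev_integral_le hk hlam2
    have hg : Integrable (fun ω => |X k ω - Y k ω| / k) μ := ((hXi.sub hYi).abs).div_const _
    have hstep : (∫ ω, |X k ω - Y k ω| / k ∂μ) - c = ∫ ω, (|X k ω - Y k ω| / k - c) ∂μ := by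
      rw [integral_sub hg (integrable_const _), integral_const, probReal_univ,
        one_smul]
    rw [hstep]
    calc |∫ ω, (|X k ω - Y k ω| / k - c) ∂μ|
        ≤ ∫ ω, |(|X k ω - Y k ω| / k - c)| ∂μ := by
          simpa [Real.norm_eq_abs] using
            norm_integral_le_integral_norm (fun ω => |X k ω - Y k ω| / k - c) (μ := μ)
      _ ≤ ∫ ω, (|X k ω / k - 1/lam1| + |Y k ω / k - 1/lam2|) ∂μ := by
          refine integral_mono (hg.sub (integrable_const _)).abs (hXdev.add hYdev) ?_
          intro ω
          have h1 : |X k ω - Y k ω| / (k:ℝ) = |(X k ω - Y k ω)/(k:ℝ)| := by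
            rw [abs_div, abs_of_nonneg hk0.le]
          have h2 : c = |1/lam1 - 1/lam2| := (abs_of_nonneg hc0).symm
          calc |(|X k ω - Y k ω| / (k:ℝ)) - c|
              = |(|(X k ω - Y k ω)/(k:ℝ)|) - (|1/lam1 - 1/lam2|)| := by rw [h1, ← h2]
            _ ≤ |(X k ω - Y k ω)/(k:ℝ) - (1/lam1 - 1/lam2)| := abs_abs_sub_abs_le_abs_sub _ _
            _ = |(X k ω/(k:ℝ) - 1/lam1) - (Y k ω/(k:ℝ) - 1/lam2)| := by congr 1; ring
            _ ≤ |X k ω/(k:ℝ) - 1/lam1| + |Y k ω/(k:ℝ) - 1/lam2| := abs_sub _ _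
      _ = (∫ ω, |X k ω / k - 1/lam1| ∂μ) + ∫ ω, |Y k ω / k - 1/lam2| ∂μ :=
          integral_add hXdev hYdev
      _ ≤ _ := add_le_add hXint hYint
  have hb : Tendsto (fun k : ℕ => 1/(lam1 * Real.sqrt k) + 1/(lam2 * Real.sqrt k))
      atTop (nhds 0) := by
    have hs : Tendsto (fun k : ℕ => ((k:ℝ)) ^ (-(2:ℝ)⁻¹)) atTop (nhds 0) :=
      (tendsto_rpow_neg_atTop (by norm_num)).comp tendsto_natCast_atTop_atTop
    have heq : ∀ᶠ k : ℕ in atTop,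
        (1/lam1) * ((k:ℝ)) ^ (-(2:ℝ)⁻¹) + (1/lam2) * ((k:ℝ)) ^ (-(2:ℝ)⁻¹)
          = 1/(lam1 * Real.sqrt k) + 1/(lam2 * Real.sqrt k) := by
      filter_upwards [eventually_ge_atTop 1] with k hk
      have hk0 : (0:ℝ) < k := by exact_mod_cast hk
      rw [Real.sqrt_eq_rpow, show (-(2:ℝ)⁻¹) = -(1/2:ℝ) by norm_num, Real.rpow_neg hk0.le]
      have hpos : (0:ℝ) < ((k:ℝ))^((1:ℝ)/2) := Real.rpow_pos_of_pos hk0 _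
      field_simp
    have := ((hs.const_mul (1/lam1)).add (hs.const_mul (1/lam2))).congr' heq
    simpa using this
  have h0 : Tendsto (fun k : ℕ => (∫ ω, |X k ω - Y k ω| / k ∂μ) - c) atTop (nhds 0) := by
    refine squeeze_zero_norm' ?_ hb
    filter_upwards [eventually_ge_atTop 1] with k hk
    simpa [Real.norm_eq_abs] using key k hk
  have := h0.add_const c
  simpa using this
end

section
/- Let 0 < λ1 < λ2. For each integer k ≥ 1, let X_k and Y_k be independent real random variables, where X_k has the Gamma distribution with shape k and rate λ1 and Y_k has the Gamma distribution with shape k and rate λ2. Then lim_{k→∞} P(X_k < Y_k) = 0. -/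
open MeasureTheory ProbabilityTheory Filter

lemma gamma_laplace (a lam t : ℝ) (ha : 0 < a) (hlam : 0 < lam) (hlt : 0 < lam + t) :
    ∫⁻ x, ENNReal.ofReal (Real.exp (-(t * x))) ∂(gammaMeasure a lam)
      = ENNReal.ofReal ((lam / (lam + t)) ^ a) := by
  have hm : Measurable (gammaPDF a lam) := (measurable_gammaPDFReal a lam).ennreal_ofReal
  have hme : Measurable fun x : ℝ => ENNReal.ofReal (Real.exp (-(t * x))) :=
    ((measurable_const.mul measurable_id).neg.exp).ennreal_ofReal
  rw [gammaMeasure, lintegral_withDensity_eq_lintegral_mul _ hm hme]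
  have h1 : (lam / (lam + t)) ^ a * (lam + t) ^ a = lam ^ a := by
    rw [← Real.mul_rpow (by positivity) hlt.le, div_mul_cancel₀ _ (ne_of_gt hlt)]
  have hkey : ∀ x : ℝ, (gammaPDF a lam * fun x => ENNReal.ofReal (Real.exp (-(t * x)))) x
      = ENNReal.ofReal ((lam / (lam + t)) ^ a) * gammaPDF a (lam + t) x := by
    intro x
    simp only [Pi.mul_apply]
    rcases le_or_gt 0 x with hx | hx
    · rw [gammaPDF_of_nonneg hx, gammaPDF_of_nonneg hx,
        ← ENNReal.ofReal_mul (by positivity), ← ENNReal.ofReal_mul (by positivity)]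
      congr 1
      have h2 : Real.exp (-(lam * x)) * Real.exp (-(t * x)) = Real.exp (-((lam + t) * x)) := by
        rw [← Real.exp_add]; ring_nf
      rw [← h1, ← h2]; ring
    · rw [gammaPDF_of_neg hx, gammaPDF_of_neg hx, zero_mul, mul_zero]
  have hm2 : Measurable (gammaPDF a (lam + t)) :=
    (measurable_gammaPDFReal a (lam + t)).ennreal_ofReal
  rw [lintegral_congr hkey, lintegral_const_mul _ hm2,
    lintegral_gammaPDF_eq_one ha hlt, mul_one]

theorem tendsto_prob_lt_zero
    {Ω : Type*} [MeasurableSpace Ω] (μ : Measure Ω) [IsProbabilityMeasure μ]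
    (lam1 lam2 : ℝ) (hlam1 : 0 < lam1) (hlam12 : lam1 < lam2)
    (X Y : ℕ → Ω → ℝ)
    (hX : ∀ k, 1 ≤ k → Measurable (X k)) (hY : ∀ k, 1 ≤ k → Measurable (Y k))
    (hindep : ∀ k, 1 ≤ k → IndepFun (X k) (Y k) μ)
    (hXlaw : ∀ k, 1 ≤ k → μ.map (X k) = gammaMeasure k lam1)
    (hYlaw : ∀ k, 1 ≤ k → μ.map (Y k) = gammaMeasure k lam2) :
    Tendsto (fun k : ℕ => μ {ω | X k ω < Y k ω}) atTop (nhds 0) := by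
  set s : ℝ := (lam2 - lam1) / 2 with hs_def
  have hs : 0 < s := by simp [hs_def]; linarith
  have h1 : 0 < lam1 + s := by linarith
  have h2 : 0 < lam2 + -s := by simp [hs_def]; linarith
  set r : ℝ := (lam1 / (lam1 + s)) * (lam2 / (lam2 + -s)) with hr_def
  have hr0 : 0 ≤ r := mul_nonneg (div_nonneg hlam1.le h1.le)
    (div_nonneg (by linarith) h2.le)
  have hr1 : r < 1 := by
    rw [hr_def, div_mul_div_comm, div_lt_one (by positivity)]
    have : (lam1 + s) * (lam2 + -s) = lam1 * lam2 + s * (lam2 - lam1 - s) := by ring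
    rw [this]
    have : lam2 - lam1 - s = s := by rw [hs_def]; ring
    rw [this]
    nlinarith
  have hmf : Measurable fun x : ℝ => ENNReal.ofReal (Real.exp (-(s * x))) :=
    ((measurable_const.mul measurable_id).neg.exp).ennreal_ofReal
  have hmg : Measurable fun x : ℝ => ENNReal.ofReal (Real.exp (-(-s * x))) :=
    ((measurable_const.mul measurable_id).neg.exp).ennreal_ofReal
  have hbound : ∀ k : ℕ, 1 ≤ k → μ {ω | X k ω < Y k ω} ≤ ENNReal.ofReal (r ^ k) := by
    intro k hk
    have hXm := hX k hk
    have hYm := hY k hk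
    have hSm : MeasurableSet {ω | X k ω < Y k ω} := measurableSet_lt hXm hYm
    have hstep1 : μ {ω | X k ω < Y k ω} ≤
        ∫⁻ ω, ENNReal.ofReal (Real.exp (-(s * X k ω)))
          * ENNReal.ofReal (Real.exp (-(-s * Y k ω))) ∂μ := by
      calc μ {ω | X k ω < Y k ω} = ∫⁻ ω in {ω | X k ω < Y k ω}, 1 ∂μ := by
            rw [setLIntegral_one]
        _ ≤ ∫⁻ ω in {ω | X k ω < Y k ω}, ENNReal.ofReal (Real.exp (-(s * X k ω)))
              * ENNReal.ofReal (Real.exp (-(-s * Y k ω))) ∂μ := by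
            apply setLIntegral_mono ((hmf.comp hXm).mul (hmg.comp hYm))
            intro ω hω
            show 1 ≤ ENNReal.ofReal (Real.exp (-(s * X k ω))) * ENNReal.ofReal (Real.exp (-(-s * Y k ω)))
            rw [← ENNReal.ofReal_mul (Real.exp_nonneg _), ← Real.exp_add]
            rw [show -(s * X k ω) + -(-s * Y k ω) = s * (Y k ω - X k ω) by ring]
            refine ENNReal.one_le_ofReal.mpr (Real.one_le_exp ?_)
            have : X k ω < Y k ω := hω
            nlinarith
        _ ≤ _ := setLIntegral_le_lintegral _ _
    have hprod : (∫⁻ ω, ENNReal.ofReal (Real.exp (-(s * X k ω)))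
          * ENNReal.ofReal (Real.exp (-(-s * Y k ω))) ∂μ)
        = (∫⁻ ω, ENNReal.ofReal (Real.exp (-(s * X k ω))) ∂μ)
          * ∫⁻ ω, ENNReal.ofReal (Real.exp (-(-s * Y k ω))) ∂μ :=
      lintegral_mul_eq_lintegral_mul_lintegral_of_indepFun (hmf.comp hXm) (hmg.comp hYm)
        ((hindep k hk).comp hmf hmg)
    have hkpos : (0 : ℝ) < (k : ℝ) := by exact_mod_cast hk
    have hXint : (∫⁻ ω, ENNReal.ofReal (Real.exp (-(s * X k ω))) ∂μ)
        = ENNReal.ofReal ((lam1 / (lam1 + s)) ^ k) := by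
      rw [← lintegral_map hmf hXm, hXlaw k hk, gamma_laplace _ _ _ hkpos hlam1 h1,
        Real.rpow_natCast]
    have hYint : (∫⁻ ω, ENNReal.ofReal (Real.exp (-(-s * Y k ω))) ∂μ)
        = ENNReal.ofReal ((lam2 / (lam2 + -s)) ^ k) := by
      rw [← lintegral_map hmg hYm, hYlaw k hk,
        gamma_laplace _ _ _ hkpos (lt_trans hlam1 hlam12) h2, Real.rpow_natCast]
    calc μ {ω | X k ω < Y k ω} ≤ _ := hstep1
      _ = ENNReal.ofReal ((lam1 / (lam1 + s)) ^ k) * ENNReal.ofReal ((lam2 / (lam2 + -s)) ^ k) := by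
          rw [hprod, hXint, hYint]
      _ = ENNReal.ofReal (r ^ k) := by
          rw [← ENNReal.ofReal_mul (by positivity), ← mul_pow, ← hr_def]
  have hlim : Tendsto (fun k : ℕ => ENNReal.ofReal (r ^ k)) atTop (nhds 0) := by
    have := ENNReal.tendsto_ofReal (tendsto_pow_atTop_nhds_zero_of_lt_one hr0 hr1)
    simpa using this
  refine tendsto_of_tendsto_of_tendsto_of_le_of_le' tendsto_const_nhds hlim ?_ ?_
  · exact Eventually.of_forall fun k => zero_le
  · filter_upwards [eventually_ge_atTop 1] with k hk using hbound k hk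
end

section
/- Let 0 < λ1 < λ2. For each integer k ≥ 1, let X_k and Y_k be independent real random variables, where X_k has the Gamma distribution with shape k and rate λ1 and Y_k has the Gamma distribution with shape k and rate λ2. Then lim_{k→∞} ( E[|X_k − Y_k|] − k·(1/λ1 − 1/λ2) ) = 0. -/
open MeasureTheory ProbabilityTheory Filter Real Set
open scoped NNReal ENNReal

section GammaHelpers

lemma myIntegrableOn_rpow_exp {a b : ℝ} (ha : 0 < a) (hb : 0 < b) :
    IntegrableOn (fun x : ℝ => x ^ (a - 1) * Real.exp (-(b * x))) (Set.Ioi 0) := by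
  have h1 : IntegrableOn (fun x : ℝ => (b * x) ^ (a - 1) * Real.exp (-(b * x))) (Set.Ioi 0) := by
    have h2 : IntegrableOn (fun y : ℝ => y ^ (a - 1) * Real.exp (-y)) (Set.Ioi (b * 0)) := by
      rw [mul_zero]
      exact (Real.GammaIntegral_convergent ha).congr_fun
        (fun x _ => mul_comm _ _) measurableSet_Ioi
    exact (integrableOn_Ioi_comp_mul_left_iff
      (fun y : ℝ => y ^ (a - 1) * Real.exp (-y)) 0 hb).mpr h2
  have h2 := h1.const_mul (b ^ (1 - a) : ℝ)
  refine MeasureTheory.IntegrableOn.congr_fun h2 (fun x hx => ?_) measurableSet_Ioi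
  have hx0 : (0:ℝ) < x := hx
  rw [Real.mul_rpow hb.le hx0.le, ← mul_assoc, ← mul_assoc, ← Real.rpow_add hb]
  norm_num

lemma myGamma_integral_eq {a r : ℝ} (ha : 0 < a) (hr : 0 < r) {g : ℝ → ℝ}
    (hg : Measurable g)
    (hint : IntegrableOn (fun x => g x * gammaPDFReal a r x) (Set.Ioi 0)) :
    Integrable g (gammaMeasure a r) ∧
      ∫ x, g x ∂(gammaMeasure a r) = ∫ x in Set.Ioi 0, g x * gammaPDFReal a r x := by
  have hpdfm : Measurable (gammaPDF a r) := (measurable_gammaPDFReal a r).ennreal_ofReal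
  have hfin : ∀ᵐ x : ℝ, gammaPDF a r x < ⊤ := ae_of_all _ fun x => ENNReal.ofReal_lt_top
  have htoReal : ∀ x, (gammaPDF a r x).toReal = gammaPDFReal a r x := fun x =>
    ENNReal.toReal_ofReal (gammaPDFReal_nonneg ha hr x)
  have h0 : ∀ᵐ x : ℝ, x ∉ Set.Ioi (0:ℝ) → g x * gammaPDFReal a r x = 0 := by
    have hne : ∀ᵐ x : ℝ, x ≠ 0 := by
      rw [ae_iff]
      simpa using Real.volume_singleton
    filter_upwards [hne] with x hx hxI
    have hxlt : x < 0 := lt_of_le_of_ne (not_lt.mp hxI) hx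
    simp [gammaPDFReal, not_le.mpr hxlt]
  have haeeq : (fun x => g x * gammaPDFReal a r x)
      =ᵐ[(volume : Measure ℝ)]
        (Set.Ioi (0:ℝ)).indicator (fun x => g x * gammaPDFReal a r x) := by
    filter_upwards [h0] with x hx
    by_cases h : x ∈ Set.Ioi (0:ℝ)
    · rw [Set.indicator_of_mem h]
    · rw [Set.indicator_of_notMem h, hx h]
  have hintfull : Integrable (fun x => g x * gammaPDFReal a r x) (volume : Measure ℝ) :=
    ((hint.integrable_indicator measurableSet_Ioi).congr haeeq.symm)
  constructor
  · rw [gammaMeasure, integrable_withDensity_iff hpdfm hfin]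
    simpa only [htoReal] using hintfull
  · rw [show gammaMeasure a r =
        (volume : Measure ℝ).withDensity
          (fun x => ((Real.toNNReal (gammaPDFReal a r x) : ℝ≥0) : ℝ≥0∞)) from rfl,
      integral_withDensity_eq_integral_smul (measurable_gammaPDFReal a r).real_toNNReal]
    have hfun : (fun x => (Real.toNNReal (gammaPDFReal a r x)) • g x)
        = fun x => g x * gammaPDFReal a r x := by
      funext x
      rw [NNReal.smul_def, Real.coe_toNNReal _ (gammaPDFReal_nonneg ha hr x), smul_eq_mul, mul_comm]
    rw [hfun, ← setIntegral_eq_integral_of_ae_compl_eq_zero h0]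

lemma myGamma_exp {a r c : ℝ} (ha : 0 < a) (hr : 0 < r) (hc : c < r) :
    Integrable (fun x => Real.exp (c * x)) (gammaMeasure a r) ∧
      ∫ x, Real.exp (c * x) ∂(gammaMeasure a r) = (r / (r - c)) ^ a := by
  have hrc : 0 < r - c := sub_pos.mpr hc
  have heq : Set.EqOn
      (fun x : ℝ => r ^ a / Real.Gamma a * (x ^ (a - 1) * Real.exp (-((r - c) * x))))
      (fun x => Real.exp (c * x) * gammaPDFReal a r x) (Set.Ioi 0) := by
    intro x hx
    have hx0 : (0:ℝ) < x := hx
    simp only [gammaPDFReal, if_pos hx0.le]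
    have hexp : Real.exp (c * x) * Real.exp (-(r * x)) = Real.exp (-((r - c) * x)) := by
      rw [← Real.exp_add]
      congr 1
      ring
    calc r ^ a / Real.Gamma a * (x ^ (a - 1) * Real.exp (-((r - c) * x)))
        = r ^ a / Real.Gamma a * (x ^ (a - 1) * (Real.exp (c * x) * Real.exp (-(r * x)))) := by
          rw [hexp]
      _ = Real.exp (c * x) * (r ^ a / Real.Gamma a * x ^ (a - 1) * Real.exp (-(r * x))) := by
          ring
  have hint : IntegrableOn (fun x => Real.exp (c * x) * gammaPDFReal a r x) (Set.Ioi 0) :=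
    MeasureTheory.IntegrableOn.congr_fun ((myIntegrableOn_rpow_exp ha hrc).const_mul _) heq measurableSet_Ioi
  have hgm : Measurable (fun x : ℝ => Real.exp (c * x)) :=
    (measurable_id.const_mul c).exp
  obtain ⟨h1, h2⟩ := myGamma_integral_eq ha hr hgm hint
  refine ⟨h1, ?_⟩
  rw [h2, ← setIntegral_congr_fun measurableSet_Ioi heq, MeasureTheory.integral_const_mul,
    integral_rpow_mul_exp_neg_mul_Ioi ha hrc]
  have hΓ : Real.Gamma a ≠ 0 := (Real.Gamma_pos_of_pos ha).ne'
  rw [Real.div_rpow hr.le hrc.le, Real.div_rpow (by norm_num) hrc.le, Real.one_rpow]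
  field_simp

lemma myGamma_mean {a r : ℝ} (ha : 0 < a) (hr : 0 < r) :
    Integrable (fun x : ℝ => x) (gammaMeasure a r) ∧
      ∫ x, x ∂(gammaMeasure a r) = a / r := by
  have heq : Set.EqOn
      (fun x : ℝ => r ^ a / Real.Gamma a * (x ^ ((a + 1) - 1) * Real.exp (-(r * x))))
      (fun x : ℝ => x * gammaPDFReal a r x) (Set.Ioi 0) := by
    intro x hx
    have hx0 : (0:ℝ) < x := hx
    simp only [gammaPDFReal, if_pos hx0.le]
    rw [show (a + 1) - 1 = 1 + (a - 1) by ring, Real.rpow_add hx0, Real.rpow_one]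
    ring
  have hint : IntegrableOn (fun x : ℝ => x * gammaPDFReal a r x) (Set.Ioi 0) :=
    MeasureTheory.IntegrableOn.congr_fun
      ((myIntegrableOn_rpow_exp (by linarith : (0:ℝ) < a + 1) hr).const_mul _) heq
      measurableSet_Ioi
  obtain ⟨h1, h2⟩ := myGamma_integral_eq ha hr measurable_id' hint
  refine ⟨h1, ?_⟩
  rw [h2, ← setIntegral_congr_fun measurableSet_Ioi heq, MeasureTheory.integral_const_mul,
    integral_rpow_mul_exp_neg_mul_Ioi (by linarith : (0:ℝ) < a + 1) hr,
    Real.Gamma_add_one ha.ne']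
  have hΓ : Real.Gamma a ≠ 0 := (Real.Gamma_pos_of_pos ha).ne'
  have hra : (0:ℝ) < r ^ a := Real.rpow_pos_of_pos hr a
  rw [Real.div_rpow (by norm_num) hr.le, Real.one_rpow, Real.rpow_add hr, Real.rpow_one]
  field_simp

end GammaHelpers

theorem tendsto_expected_abs_diff_sub_linear
    {Ω : Type*} [MeasurableSpace Ω] (μ : Measure Ω) [IsProbabilityMeasure μ]
    (lam1 lam2 : ℝ) (hlam1 : 0 < lam1) (hlam12 : lam1 < lam2)
    (X Y : ℕ → Ω → ℝ)
    (hX : ∀ k, 1 ≤ k → Measurable (X k)) (hY : ∀ k, 1 ≤ k → Measurable (Y k))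
    (hindep : ∀ k, 1 ≤ k → IndepFun (X k) (Y k) μ)
    (hXlaw : ∀ k, 1 ≤ k → μ.map (X k) = gammaMeasure k lam1)
    (hYlaw : ∀ k, 1 ≤ k → μ.map (Y k) = gammaMeasure k lam2) :
    Tendsto (fun k : ℕ =>
        (∫ ω, |X k ω - Y k ω| ∂μ) - (k : ℝ) * (1 / lam1 - 1 / lam2))
      atTop (nhds 0) := by
  have hlam2 : 0 < lam2 := hlam1.trans hlam12
  set θ : ℝ := (lam2 - lam1) / 2 with hθdef
  have hθ : 0 < θ := by rw [hθdef]; linarith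
  have hl2θ : 0 < lam2 - θ := by rw [hθdef]; linarith
  have hl1θ : 0 < lam1 + θ := by positivity
  set ρ : ℝ := (lam2 / (lam2 - θ)) * (lam1 / (lam1 + θ)) with hρdef
  have hρ0 : 0 ≤ ρ := by
    rw [hρdef]; positivity
  have hρ1 : ρ < 1 := by
    rw [hρdef, div_mul_div_comm, div_lt_one (by positivity)]
    rw [hθdef]
    nlinarith [sq_nonneg (lam2 - lam1)]
  have key : ∀ k : ℕ, 1 ≤ k →
      0 ≤ (∫ ω, |X k ω - Y k ω| ∂μ) - (k : ℝ) * (1 / lam1 - 1 / lam2) ∧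
      (∫ ω, |X k ω - Y k ω| ∂μ) - (k : ℝ) * (1 / lam1 - 1 / lam2) ≤ 2 / θ * ρ ^ k := by
    intro k hk
    have hk0 : (0:ℝ) < (k:ℝ) := by exact_mod_cast hk
    have hXm := hX k hk
    have hYm := hY k hk
    have hmapX : AEMeasurable (X k) μ := hXm.aemeasurable
    have hmapY : AEMeasurable (Y k) μ := hYm.aemeasurable
    -- means
    obtain ⟨hXi', hXmean'⟩ := myGamma_mean hk0 hlam1
    rw [← hXlaw k hk] at hXi' hXmean'
    have hXi : Integrable (X k) μ := by
      have := (integrable_map_measure aestronglyMeasurable_id hmapX).mp hXi'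
      simpa [Function.comp] using this
    have hXmean : ∫ ω, X k ω ∂μ = (k:ℝ) / lam1 := by
      rw [← hXmean']
      exact (integral_map hmapX measurable_id'.aestronglyMeasurable).symm
    obtain ⟨hYi', hYmean'⟩ := myGamma_mean hk0 hlam2
    rw [← hYlaw k hk] at hYi' hYmean'
    have hYi : Integrable (Y k) μ := by
      have := (integrable_map_measure aestronglyMeasurable_id hmapY).mp hYi'
      simpa [Function.comp] using this
    have hYmean : ∫ ω, Y k ω ∂μ = (k:ℝ) / lam2 := by
      rw [← hYmean']
      exact (integral_map hmapY measurable_id'.aestronglyMeasurable).symm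
    -- exponential moments
    have hθlt2 : θ < lam2 := by rw [hθdef]; linarith
    have hθlt1 : -θ < lam1 := by linarith
    have hgm2 : Measurable (fun x : ℝ => Real.exp (θ * x)) := (measurable_id.const_mul θ).exp
    have hgm1 : Measurable (fun x : ℝ => Real.exp (-θ * x)) := (measurable_id.const_mul (-θ)).exp
    obtain ⟨hEYi', hEY'⟩ := myGamma_exp hk0 hlam2 hθlt2
    rw [← hYlaw k hk] at hEYi' hEY'
    have hEYi : Integrable (fun ω => Real.exp (θ * Y k ω)) μ := by
      have := (integrable_map_measure hgm2.aestronglyMeasurable hmapY).mp hEYi'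
      simpa [Function.comp_def] using this
    have hEY : ∫ ω, Real.exp (θ * Y k ω) ∂μ = (lam2 / (lam2 - θ)) ^ (k:ℝ) := by
      rw [← hEY']
      exact (integral_map hmapY hgm2.aestronglyMeasurable).symm
    obtain ⟨hEXi', hEX'⟩ := myGamma_exp hk0 hlam1 hθlt1
    rw [← hXlaw k hk] at hEXi' hEX'
    have hEXi : Integrable (fun ω => Real.exp (-θ * X k ω)) μ := by
      have := (integrable_map_measure hgm1.aestronglyMeasurable hmapX).mp hEXi'
      simpa [Function.comp_def] using this
    rw [sub_neg_eq_add] at hEX'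
    have hEX : ∫ ω, Real.exp (-θ * X k ω) ∂μ = (lam1 / (lam1 + θ)) ^ (k:ℝ) := by
      rw [← hEX']
      exact (integral_map hmapX hgm1.aestronglyMeasurable).symm
    -- independence of the exponentials
    have hindE : IndepFun (fun ω => Real.exp (θ * Y k ω)) (fun ω => Real.exp (-θ * X k ω)) μ :=
      (hindep k hk).symm.comp hgm2 hgm1
    have hprodi : Integrable (fun ω => Real.exp (θ * Y k ω) * Real.exp (-θ * X k ω)) μ :=
      hindE.integrable_mul hEYi hEXi
    have hprod : ∫ ω, Real.exp (θ * Y k ω) * Real.exp (-θ * X k ω) ∂μ = ρ ^ k := by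
      have := hindE.integral_fun_mul_eq_mul_integral hEYi.1 hEXi.1
      calc ∫ ω, Real.exp (θ * Y k ω) * Real.exp (-θ * X k ω) ∂μ
          = (∫ ω, Real.exp (θ * Y k ω) ∂μ) * ∫ ω, Real.exp (-θ * X k ω) ∂μ := this
        _ = (lam2 / (lam2 - θ)) ^ (k:ℝ) * (lam1 / (lam1 + θ)) ^ (k:ℝ) := by rw [hEY, hEX]
        _ = ρ ^ (k:ℝ) := by
            rw [hρdef, ← Real.mul_rpow (by positivity) (by positivity)]
        _ = ρ ^ k := by rw [Real.rpow_natCast]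
    -- rewrite the difference as one integral
    have hsubi : Integrable (fun ω => X k ω - Y k ω) μ := hXi.sub hYi
    have habsi : Integrable (fun ω => |X k ω - Y k ω|) μ := hsubi.abs
    have hmean : ∫ ω, (X k ω - Y k ω) ∂μ = (k:ℝ) * (1 / lam1 - 1 / lam2) := by
      rw [integral_sub hXi hYi, hXmean, hYmean]
      ring
    have hrw : (∫ ω, |X k ω - Y k ω| ∂μ) - (k:ℝ) * (1 / lam1 - 1 / lam2)
        = ∫ ω, (|X k ω - Y k ω| - (X k ω - Y k ω)) ∂μ := by
      rw [integral_sub habsi hsubi, hmean]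
    constructor
    · rw [hrw]
      exact integral_nonneg fun ω => sub_nonneg.mpr (le_abs_self _)
    · rw [hrw]
      have hptwise : ∀ ω, |X k ω - Y k ω| - (X k ω - Y k ω)
          ≤ 2 / θ * (Real.exp (θ * Y k ω) * Real.exp (-θ * X k ω)) := by
        intro ω
        have hexp : Real.exp (θ * Y k ω) * Real.exp (-θ * X k ω)
            = Real.exp (θ * (Y k ω - X k ω)) := by
          rw [← Real.exp_add]
          congr 1
          ring
        rw [hexp]
        set s : ℝ := Y k ω - X k ω with hs
        have hE : 0 < Real.exp (θ * s) := Real.exp_pos _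
        rcases le_or_gt s 0 with hsle | hslt
        · have habs : |X k ω - Y k ω| = X k ω - Y k ω := abs_of_nonneg (by rw [hs] at hsle; linarith)
          rw [habs]
          have : (0:ℝ) ≤ 2 / θ * Real.exp (θ * s) := by positivity
          linarith
        · have habs : |X k ω - Y k ω| = s := by
            rw [abs_of_nonpos (by rw [hs] at hslt; linarith)]
            rw [hs]; ring
          have hXY : X k ω - Y k ω = -s := by rw [hs]; ring
          rw [habs, hXY]
          have h1 : θ * s ≤ Real.exp (θ * s) := by
            have := Real.add_one_le_exp (θ * s)
            linarith
          rw [div_mul_eq_mul_div, le_div_iff₀ hθ]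
          nlinarith
      calc ∫ ω, (|X k ω - Y k ω| - (X k ω - Y k ω)) ∂μ
          ≤ ∫ ω, 2 / θ * (Real.exp (θ * Y k ω) * Real.exp (-θ * X k ω)) ∂μ :=
            integral_mono (habsi.sub hsubi) (hprodi.const_mul _) hptwise
        _ = 2 / θ * ρ ^ k := by rw [MeasureTheory.integral_const_mul, hprod]
  have hlim : Tendsto (fun k : ℕ => 2 / θ * ρ ^ k) atTop (nhds 0) := by
    have := (tendsto_pow_atTop_nhds_zero_of_lt_one hρ0 hρ1).const_mul (2 / θ)
    simpa using this
  exact tendsto_of_tendsto_of_tendsto_of_le_of_le' tendsto_const_nhds hlim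
    (eventually_atTop.mpr ⟨1, fun k hk => (key k hk).1⟩)
    (eventually_atTop.mpr ⟨1, fun k hk => (key k hk).2⟩)
end

section
/- Let 0 < λ1 < λ2. For each integer k ≥ 1, let X_k and Y_k be independent real random variables, where X_k has the Gamma distribution with shape k and rate λ1 and Y_k has the Gamma distribution with shape k and rate λ2. Then lim_{k→∞} Var[|X_k − Y_k|]/k = 1/λ1² + 1/λ2², where Var[|X_k − Y_k|] = E[|X_k − Y_k|²] − (E[|X_k − Y_k|])². -/
open scoped ENNReal NNReal
open MeasureTheory ProbabilityTheory Filter Real Set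

namespace VarAux

lemma Gamma_prod (a : ℝ) (ha : 0 < a) (n : ℕ) :
    Real.Gamma (a + n) = (∏ i ∈ Finset.range n, (a + i)) * Real.Gamma a := by
  induction n with
  | zero => simp
  | succ m ih =>
    have h1 : a + (m + 1 : ℕ) = (a + m) + 1 := by push_cast; ring
    have h2 : (0:ℝ) < a + m := by positivity
    rw [h1, Real.Gamma_add_one h2.ne', ih, Finset.prod_range_succ]
    push_cast
    ring

lemma pdf_int_Ioi (a r : ℝ) (ha : 0 < a) (hr : 0 < r) (n : ℕ) :
    IntegrableOn (fun x => gammaPDFReal a r x * x ^ n) (Ioi (0:ℝ)) ∧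
    ∫ x in Ioi (0:ℝ), gammaPDFReal a r x * x ^ n
      = (∏ i ∈ Finset.range n, (a + i)) / r ^ n := by
  have han : (0:ℝ) < a + n := by positivity
  have heq : ∀ x ∈ Ioi (0:ℝ), gammaPDFReal a r x * x ^ n
      = r ^ a / Real.Gamma a * (x ^ (a + n - 1) * Real.exp (-(r * x))) := by
    intro x hx
    have hx0 : (0:ℝ) < x := hx
    rw [gammaPDFReal, if_pos hx0.le]
    rw [show (x:ℝ) ^ n = x ^ (n:ℝ) from (Real.rpow_natCast x n).symm]
    rw [show a + n - 1 = (a - 1) + (n:ℝ) by ring, Real.rpow_add hx0]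
    ring
  have hint : IntegrableOn
      (fun x => r ^ a / Real.Gamma a * (x ^ (a + n - 1) * Real.exp (-(r * x)))) (Ioi (0:ℝ)) := by
    apply Integrable.const_mul
    have := integrableOn_rpow_mul_exp_neg_mul_rpow (p := 1) (s := a + n - 1) (b := r)
      (by linarith) zero_lt_one hr
    refine this.congr_fun (fun x hx => ?_) measurableSet_Ioi
    simp only [Real.rpow_one]
    ring_nf
  constructor
  · exact hint.congr_fun (fun x hx => (heq x hx).symm) measurableSet_Ioi
  · rw [setIntegral_congr_fun measurableSet_Ioi heq, integral_const_mul,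
      integral_rpow_mul_exp_neg_mul_Ioi han hr, Gamma_prod a ha n]
    rw [Real.div_rpow zero_le_one hr.le, Real.one_rpow, Real.rpow_add hr,
      Real.rpow_natCast]
    have h1 : Real.Gamma a ≠ 0 := (Real.Gamma_pos_of_pos ha).ne'
    have h2 : r ^ a ≠ 0 := (Real.rpow_pos_of_pos hr a).ne'
    field_simp

lemma pdf_zero {a r x : ℝ} (hx : x < 0) : gammaPDFReal a r x = 0 := by
  rw [gammaPDFReal, if_neg (not_le.mpr hx)]

lemma pdf_int_full (a r : ℝ) (ha : 0 < a) (hr : 0 < r) (n : ℕ) :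
    Integrable (fun x => gammaPDFReal a r x * x ^ n) ∧
    ∫ x, gammaPDFReal a r x * x ^ n = (∏ i ∈ Finset.range n, (a + i)) / r ^ n := by
  obtain ⟨h, hval⟩ := pdf_int_Ioi a r ha hr n
  have hio : IntegrableOn (fun x => gammaPDFReal a r x * x ^ n) (Iio (0:ℝ)) := by
    refine IntegrableOn.congr_fun integrableOn_zero (fun x hx => ?_) measurableSet_Iio
    rw [pdf_zero (mem_Iio.mp hx), zero_mul]
  have hici : IntegrableOn (fun x => gammaPDFReal a r x * x ^ n) (Ici (0:ℝ)) := by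
    rwa [integrableOn_Ici_iff_integrableOn_Ioi]
  have hall : Integrable (fun x => gammaPDFReal a r x * x ^ n) := by
    rw [← integrableOn_univ, ← Iio_union_Ici (a := (0:ℝ))]
    exact hio.union hici
  refine ⟨hall, ?_⟩
  rw [← integral_add_compl measurableSet_Iio hall, compl_Iio]
  have h0 : ∫ x in Iio (0:ℝ), gammaPDFReal a r x * x ^ n = 0 := by
    rw [setIntegral_congr_fun measurableSet_Iio
      (fun x hx => by rw [pdf_zero (mem_Iio.mp hx), zero_mul])]
    exact integral_zero _ _
  rw [h0, zero_add, integral_Ici_eq_integral_Ioi, hval]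

lemma gamma_pow (a r : ℝ) (ha : 0 < a) (hr : 0 < r) (n : ℕ) :
    Integrable (fun x => x ^ n) (gammaMeasure a r) ∧
    ∫ x, x ^ n ∂gammaMeasure a r = (∏ i ∈ Finset.range n, (a + i)) / r ^ n := by
  obtain ⟨hall, hval⟩ := pdf_int_full a r ha hr n
  have hd : gammaPDF a r = fun x => ((gammaPDFReal a r x).toNNReal : ℝ≥0∞) := rfl
  constructor
  · rw [gammaMeasure, show gammaPDF a r = fun x => ENNReal.ofReal (gammaPDFReal a r x) from rfl,
      integrable_withDensity_iff ((measurable_gammaPDFReal a r).ennreal_ofReal)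
      (Eventually.of_forall fun x => ENNReal.ofReal_lt_top)]
    refine hall.congr (Eventually.of_forall fun x => ?_)
    simp only [gammaPDF, ENNReal.toReal_ofReal (gammaPDFReal_nonneg ha hr x)]
    ring
  · rw [gammaMeasure, hd,
      integral_withDensity_eq_integral_smul (measurable_gammaPDFReal a r).real_toNNReal]
    rw [← hval]
    congr 1
    funext x
    rw [NNReal.smul_def, Real.coe_toNNReal _ (gammaPDFReal_nonneg ha hr x)]
    rfl

lemma moment {Ω : Type*} [MeasurableSpace Ω] (μ : Measure Ω) (X : Ω → ℝ) (hX : Measurable X)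
    {a r : ℝ} (ha : 0 < a) (hr : 0 < r) (hlaw : μ.map X = gammaMeasure a r) (n : ℕ) :
    Integrable (fun ω => X ω ^ n) μ ∧
    ∫ ω, X ω ^ n ∂μ = (∏ i ∈ Finset.range n, (a + i)) / r ^ n := by
  obtain ⟨hgi, hgv⟩ := gamma_pow a r ha hr n
  have hsm : AEStronglyMeasurable (fun x : ℝ => x ^ n) (μ.map X) :=
    (measurable_id.pow_const n).aestronglyMeasurable
  constructor
  · exact (integrable_map_measure hsm hX.aemeasurable).mp (hlaw ▸ hgi)
  · rw [← integral_map hX.aemeasurable hsm, hlaw, hgv]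

lemma central4 {Ω : Type*} [MeasurableSpace Ω] (μ : Measure Ω)
    (X : Ω → ℝ) (c K r : ℝ) (hc : c = K / r) (hr : 0 < r) (hK : 0 < K)
    (hmom : ∀ n : ℕ, Integrable (fun ω => X ω ^ n) μ ∧
      ∫ ω, X ω ^ n ∂μ = (∏ i ∈ Finset.range n, (K + i)) / r ^ n) :
    Integrable (fun ω => (X ω - c) ^ 4) μ ∧
    ∫ ω, (X ω - c) ^ 4 ∂μ = (3 * K ^ 2 + 6 * K) / r ^ 4 := by
  set cf : ℕ → ℝ := fun i => (-c) ^ (4 - i) * (Nat.choose 4 i) with hcf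
  have hfun : (fun ω => (X ω - c) ^ 4)
      = fun ω => ∑ i ∈ Finset.range 5, cf i * X ω ^ i := by
    funext ω
    simp only [hcf, Finset.sum_range_succ]
    norm_num [Nat.choose]
    ring
  have hint : ∀ i ∈ Finset.range 5, Integrable (fun ω => cf i * X ω ^ i) μ :=
    fun i _ => (hmom i).1.const_mul _
  constructor
  · rw [hfun]; exact integrable_finset_sum _ hint
  · rw [hfun, integral_finset_sum _ hint]
    have hv : ∀ i, ∫ ω, cf i * X ω ^ i ∂μ = cf i * ((∏ j ∈ Finset.range i, (K + j)) / r ^ i) :=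
      fun i => by rw [integral_const_mul, (hmom i).2]
    simp only [hv]
    simp only [hcf, Finset.sum_range_succ, Finset.prod_range_succ, hc]
    norm_num [Nat.choose]
    field_simp
    ring

lemma quart (u v : ℝ) : (u - v) ^ 4 ≤ 8 * (u ^ 4 + v ^ 4) := by
  nlinarith [sq_nonneg (u+v), sq_nonneg (u-v), sq_nonneg (u^2 - v^2), sq_nonneg (u^2+v^2),
    sq_nonneg u, sq_nonneg v, sq_nonneg (u*v)]

lemma ptwise (m z : ℝ) (hm : 0 < m) : |z| - z ≤ 2 * (z - m) ^ 4 / m ^ 3 := by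
  rcases le_or_gt 0 z with hz | hz
  · have h1 : |z| - z = 0 := by rw [abs_of_nonneg hz]; ring
    rw [h1]
    positivity
  · have h1 : |z| - z = 2 * (-z) := by rw [abs_of_neg hz]; ring
    rw [h1]
    have hmz : m ≤ m - z := by linarith
    have h2 : -z ≤ (z - m) ^ 4 / m ^ 3 := by
      rw [le_div_iff₀ (by positivity : (0:ℝ) < m ^ 3)]
      have h4 : (z - m) ^ 4 = (m - z) ^ 4 := by ring
      rw [h4]
      calc -z * m ^ 3 ≤ (m - z) * (m - z) ^ 3 := by
            apply mul_le_mul (by linarith) (pow_le_pow_left₀ hm.le hmz 3) (by positivity)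
              (by linarith)
        _ = (m - z) ^ 4 := by ring
    have h3 : 2 * (z - m) ^ 4 / m ^ 3 = 2 * ((z - m) ^ 4 / m ^ 3) := by ring
    rw [h3]
    linarith

end VarAux

theorem tendsto_variance_abs_diff_div_k
    {Ω : Type*} [MeasurableSpace Ω] (μ : Measure Ω) [IsProbabilityMeasure μ]
    (lam1 lam2 : ℝ) (hlam1 : 0 < lam1) (hlam12 : lam1 < lam2)
    (X Y : ℕ → Ω → ℝ)
    (hX : ∀ k, 1 ≤ k → Measurable (X k)) (hY : ∀ k, 1 ≤ k → Measurable (Y k))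
    (hindep : ∀ k, 1 ≤ k → IndepFun (X k) (Y k) μ)
    (hXlaw : ∀ k, 1 ≤ k → μ.map (X k) = gammaMeasure k lam1)
    (hYlaw : ∀ k, 1 ≤ k → μ.map (Y k) = gammaMeasure k lam2) :
    Tendsto (fun k : ℕ =>
        ((∫ ω, |X k ω - Y k ω| ^ 2 ∂μ) - (∫ ω, |X k ω - Y k ω| ∂μ) ^ 2) / k)
      atTop (nhds (1 / lam1 ^ 2 + 1 / lam2 ^ 2)) := by
  have hlam2 : 0 < lam2 := hlam1.trans hlam12
  set s : ℝ := 1 / lam1 ^ 2 + 1 / lam2 ^ 2 with hs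
  set c : ℝ := 1 / lam1 - 1 / lam2 with hcdef
  have hc : 0 < c := by
    rw [hcdef, sub_pos]
    exact one_div_lt_one_div_of_lt hlam1 hlam12
  set t : ℝ := 1 / lam1 ^ 4 + 1 / lam2 ^ 4 with htdef
  have ht : 0 < t := by positivity
  set D : ℝ := 144 * t / c ^ 3 with hDdef
  have hD : 0 < D := by positivity
  set E : ℝ := 2 * c * D + D ^ 2 with hEdef
  have hE : 0 < E := by positivity
  -- the key per-k bounds
  have key : ∀ k : ℕ, 1 ≤ k →
      s - E / (k : ℝ) ≤ ((∫ ω, |X k ω - Y k ω| ^ 2 ∂μ) - (∫ ω, |X k ω - Y k ω| ∂μ) ^ 2) / k ∧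
      ((∫ ω, |X k ω - Y k ω| ^ 2 ∂μ) - (∫ ω, |X k ω - Y k ω| ∂μ) ^ 2) / k ≤ s := by
    intro k hk
    have hK1 : (1:ℝ) ≤ (k:ℝ) := by exact_mod_cast hk
    have hK : (0:ℝ) < (k:ℝ) := by linarith
    set K : ℝ := (k : ℝ) with hKdef
    have hXm := hX k hk
    have hYm := hY k hk
    have momX := VarAux.moment μ (X k) hXm hK hlam1 (hXlaw k hk)
    have momY := VarAux.moment μ (Y k) hYm hK hlam2 (hYlaw k hk)
    set a : ℝ := K / lam1 with hadef
    set b : ℝ := K / lam2 with hbdef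
    obtain ⟨IC4X, MX⟩ := VarAux.central4 μ (X k) a K lam1 hadef hlam1 hK momX
    obtain ⟨IC4Y, MY⟩ := VarAux.central4 μ (Y k) b K lam2 hbdef hlam2 hK momY
    have IX1 : Integrable (X k) μ := by
      have := (momX 1).1; simpa using this
    have IY1 : Integrable (Y k) μ := by
      have := (momY 1).1; simpa using this
    have he1 : ∫ ω, X k ω ∂μ = a := by
      have := (momX 1).2
      simpa [hadef] using this
    have hf1 : ∫ ω, Y k ω ∂μ = b := by
      have := (momY 1).2
      simpa [hbdef] using this
    have he2 : ∫ ω, X k ω ^ 2 ∂μ = K * (K + 1) / lam1 ^ 2 := by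
      rw [(momX 2).2]
      norm_num [Finset.prod_range_succ]
    have hf2 : ∫ ω, Y k ω ^ 2 ∂μ = K * (K + 1) / lam2 ^ 2 := by
      rw [(momY 2).2]
      norm_num [Finset.prod_range_succ]
    have IX2 : Integrable (fun ω => X k ω ^ 2) μ := (momX 2).1
    have IY2 : Integrable (fun ω => Y k ω ^ 2) μ := (momY 2).1
    have hInd := hindep k hk
    have IXY : Integrable (fun ω => X k ω * Y k ω) μ := hInd.integrable_mul IX1 IY1
    have hEXY : ∫ ω, X k ω * Y k ω ∂μ = a * b := by
      have := hInd.integral_mul_eq_mul_integral hXm.aestronglyMeasurable hYm.aestronglyMeasurable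
      rw [← he1, ← hf1]
      exact this
    set m : ℝ := K * c with hmdef
    have hm : 0 < m := by positivity
    have hmab : m = a - b := by
      rw [hmdef, hadef, hbdef, hcdef]
      field_simp
    have IZ : Integrable (fun ω => X k ω - Y k ω) μ := IX1.sub IY1
    have IZa : Integrable (fun ω => |X k ω - Y k ω|) μ := IZ.abs
    have hEZ : ∫ ω, (X k ω - Y k ω) ∂μ = m := by
      rw [integral_sub IX1 IY1, he1, hf1, hmab]
    -- second moment of Z
    have hZ2fun : (fun ω => |X k ω - Y k ω| ^ 2)
        = fun ω => (X k ω ^ 2 - 2 * (X k ω * Y k ω)) + Y k ω ^ 2 := by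
      funext ω
      rw [sq_abs]
      ring
    have hEZ2 : ∫ ω, |X k ω - Y k ω| ^ 2 ∂μ = m ^ 2 + K * s := by
      have hadd : ∫ ω, (X k ω ^ 2 - 2 * (X k ω * Y k ω) + Y k ω ^ 2) ∂μ
          = (∫ ω, (X k ω ^ 2 - 2 * (X k ω * Y k ω)) ∂μ) + ∫ ω, Y k ω ^ 2 ∂μ :=
        integral_add (IX2.sub (IXY.const_mul 2)) IY2
      have hsub : ∫ ω, (X k ω ^ 2 - 2 * (X k ω * Y k ω)) ∂μ
          = (∫ ω, X k ω ^ 2 ∂μ) - ∫ ω, 2 * (X k ω * Y k ω) ∂μ :=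
        integral_sub IX2 (IXY.const_mul 2)
      rw [hZ2fun, hadd, hsub, integral_const_mul, hEXY, he2, hf2,
        hmab, hadef, hbdef, hs]
      field_simp
      ring
    -- the deviation d
    set d : ℝ := (∫ ω, |X k ω - Y k ω| ∂μ) - m with hddef
    have hEabs : ∫ ω, |X k ω - Y k ω| ∂μ = m + d := by rw [hddef]; ring
    have hd0 : 0 ≤ d := by
      rw [hddef, sub_nonneg, ← hEZ]
      exact integral_mono IZ IZa fun ω => le_abs_self _
    -- upper bound for d
    have hptw : ∀ ω, |X k ω - Y k ω| - (X k ω - Y k ω)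
        ≤ 16 / m ^ 3 * ((X k ω - a) ^ 4 + (Y k ω - b) ^ 4) := by
      intro ω
      have h1 := VarAux.ptwise m (X k ω - Y k ω) hm
      have h2 : (X k ω - Y k ω - m) ^ 4 ≤ 8 * ((X k ω - a) ^ 4 + (Y k ω - b) ^ 4) := by
        have h3 : X k ω - Y k ω - m = (X k ω - a) - (Y k ω - b) := by
          rw [hmab]; ring
        rw [h3]
        exact VarAux.quart _ _
      have h4 : 2 * (X k ω - Y k ω - m) ^ 4 / m ^ 3
          ≤ 16 / m ^ 3 * ((X k ω - a) ^ 4 + (Y k ω - b) ^ 4) := by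
        rw [div_le_iff₀ (by positivity : (0:ℝ) < m ^ 3)]
        have hm3 : (0:ℝ) < m ^ 3 := by positivity
        calc 2 * (X k ω - Y k ω - m) ^ 4 ≤ 2 * (8 * ((X k ω - a) ^ 4 + (Y k ω - b) ^ 4)) := by
              linarith
          _ = 16 / m ^ 3 * ((X k ω - a) ^ 4 + (Y k ω - b) ^ 4) * m ^ 3 := by
              field_simp
              ring
      linarith
    have hdle : d ≤ 16 / m ^ 3 * ((3 * K ^ 2 + 6 * K) / lam1 ^ 4 + (3 * K ^ 2 + 6 * K) / lam2 ^ 4) := by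
      have hdi : d = ∫ ω, (|X k ω - Y k ω| - (X k ω - Y k ω)) ∂μ := by
        rw [integral_sub IZa IZ, hEZ, hddef]
      rw [hdi]
      calc ∫ ω, (|X k ω - Y k ω| - (X k ω - Y k ω)) ∂μ
          ≤ ∫ ω, 16 / m ^ 3 * ((X k ω - a) ^ 4 + (Y k ω - b) ^ 4) ∂μ :=
            integral_mono (IZa.sub IZ) ((IC4X.add IC4Y).const_mul _) hptw
        _ = 16 / m ^ 3 * ((3 * K ^ 2 + 6 * K) / lam1 ^ 4 + (3 * K ^ 2 + 6 * K) / lam2 ^ 4) := by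
            rw [integral_const_mul, integral_add IC4X IC4Y, MX, MY]
    have hdD : d ≤ D / K := by
      refine hdle.trans ?_
      have heq1 : 16 / m ^ 3 * ((3 * K ^ 2 + 6 * K) / lam1 ^ 4 + (3 * K ^ 2 + 6 * K) / lam2 ^ 4)
          = (48 * K + 96) * t / (K ^ 2 * c ^ 3) := by
        rw [hmdef, htdef]
        field_simp
        ring
      have heq2 : D / K = 144 * t / (c ^ 3 * K) := by
        rw [hDdef]
        field_simp
      rw [heq1, heq2, div_le_div_iff₀ (by positivity) (by positivity)]
      have h96 : 0 ≤ 96 * (K - 1) * t * (c ^ 3 * K) := by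
        have : (0:ℝ) ≤ K - 1 := by linarith
        positivity
      have expand : 144 * t * (K ^ 2 * c ^ 3) - (48 * K + 96) * t * (c ^ 3 * K)
          = 96 * (K - 1) * t * (c ^ 3 * K) := by ring
      linarith [h96, expand]
    have hdD' : d ≤ D := hdD.trans (by
      rw [div_le_iff₀ hK]
      exact le_mul_of_one_le_right hD.le hK1)
    have hdK : d * K ≤ D := by
      rw [← le_div_iff₀ hK]
      exact hdD
    -- final bounds
    rw [hEZ2, hEabs]
    have hx : (m + d) ^ 2 = m ^ 2 + 2 * m * d + d ^ 2 := by ring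
    constructor
    · rw [le_div_iff₀ hK]
      have hsq : d ^ 2 ≤ D ^ 2 := pow_le_pow_left₀ hd0 hdD' 2
      have hmd : 2 * m * d ≤ 2 * c * D := by
        have h1 : 2 * m * d = 2 * c * (d * K) := by rw [hmdef]; ring
        have h2 := mul_le_mul_of_nonneg_left hdK (by positivity : (0:ℝ) ≤ 2 * c)
        linarith
      have hEK : (s - E / K) * K = s * K - E := by
        field_simp
      rw [hEK, hEdef]
      linarith [hx, hsq, hmd]
    · rw [div_le_iff₀ hK]
      linarith [hx, mul_nonneg hm.le hd0, sq_nonneg d]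
  -- squeeze
  have hlow : Tendsto (fun k : ℕ => s - E / (k : ℝ)) atTop (nhds s) := by
    have := tendsto_const_div_atTop_nhds_zero_nat E
    have h2 := tendsto_const_nhds (x := s) (f := atTop (α := ℕ)).sub this
    simpa using h2
  refine tendsto_of_tendsto_of_tendsto_of_le_of_le' hlow tendsto_const_nhds ?_ ?_
  · filter_upwards [eventually_ge_atTop 1] with k hk
    exact (key k hk).1
  · filter_upwards [eventually_ge_atTop 1] with k hk
    exact (key k hk).2
end

section
/- Let λ1, λ2 > 0 and Δt ≥ 0. Let X and Y be independent real random variables, where X has the exponential distribution with rate λ1 and Y has the exponential distribution with rate λ2. Then E[|X + Δt − Y|] = (1/λ1 − 1/λ2 + Δt)·(1 − 2e^{−λ2·Δt}) + 2e^{−λ2·Δt}·( λ2/(λ1·(λ1 + λ2)) + Δt ). -/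
open scoped ENNReal NNReal
open MeasureTheory ProbabilityTheory Real Set Filter Topology

namespace ExpAbsAux

lemma tendsto_aux (r p q : ℝ) (hr : 0 < r) :
    Tendsto (fun x : ℝ => -(p + q * x) * Real.exp (-(r * x))) atTop (𝓝 0) := by
  have hrx : Tendsto (fun x : ℝ => r * x) atTop atTop :=
    Tendsto.const_mul_atTop hr tendsto_id
  have h1 : Tendsto (fun x : ℝ => (r * x) ^ 1 * Real.exp (-(r * x))) atTop (𝓝 0) :=
    (tendsto_pow_mul_exp_neg_atTop_nhds_zero 1).comp hrx
  have h0' := (tendsto_pow_mul_exp_neg_atTop_nhds_zero 0).comp hrx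
  have h0 : Tendsto (fun x : ℝ => Real.exp (-(r * x))) atTop (𝓝 0) :=
    h0'.congr fun x => by simp [Function.comp]
  have key := (h0.const_mul (-p)).add (h1.const_mul (-(q / r)))
  rw [mul_zero, mul_zero, add_zero] at key
  refine key.congr fun x => ?_
  have hr' : r ≠ 0 := hr.ne'
  field_simp
  ring

lemma hasDerivAt_aux (r p q x : ℝ) :
    HasDerivAt (fun x => -(p + q * x) * Real.exp (-(r * x)))
      ((r * p - q + r * q * x) * Real.exp (-(r * x))) x := by
  have h1 : HasDerivAt (fun x : ℝ => -(p + q * x)) (-q) x := by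
    have := (((hasDerivAt_id' x).const_mul q).const_add p).fun_neg; rwa [mul_one] at this
  have h3 : HasDerivAt (fun x : ℝ => -(r * x)) (-r) x := by
    have := ((hasDerivAt_id' x).const_mul r).fun_neg; rwa [mul_one] at this
  have h2 : HasDerivAt (fun x : ℝ => Real.exp (-(r * x))) (-r * Real.exp (-(r * x))) x := by
    simpa [mul_comm] using h3.exp
  have := h1.mul h2
  exact this.congr_deriv (by ring)

lemma fun_eq_aux (r p q : ℝ) (hr : 0 < r) :
    (fun x : ℝ => (p + q * x) * Real.exp (-(r * x)))
      = fun x => (r * ((p + q / r) / r) - q / r + r * (q / r) * x) * Real.exp (-(r * x)) := by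
  funext x
  have hr' : r ≠ 0 := hr.ne'
  field_simp
  ring

lemma integrableOn_aux (r p q a : ℝ) (hr : 0 < r) (hpq : ∀ x ∈ Ioi a, 0 ≤ p + q * x) :
    IntegrableOn (fun x => (p + q * x) * Real.exp (-(r * x))) (Ioi a) := by
  have hpos : ∀ x ∈ Ioi a,
      0 ≤ (r * ((p + q / r) / r) - q / r + r * (q / r) * x) * Real.exp (-(r * x)) := by
    intro x hx
    rw [← congrFun (fun_eq_aux r p q hr) x]
    exact mul_nonneg (hpq x hx) (Real.exp_nonneg _)
  rw [fun_eq_aux r p q hr]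
  exact integrableOn_Ioi_deriv_of_nonneg'
    (g := fun x => -((p + q / r) / r + (q / r) * x) * Real.exp (-(r * x)))
    (fun x _ => hasDerivAt_aux r ((p + q / r) / r) (q / r) x) hpos
    (tendsto_aux r _ _ hr)

lemma integral_aux (r p q a : ℝ) (hr : 0 < r) (hpq : ∀ x ∈ Ioi a, 0 ≤ p + q * x) :
    ∫ x in Ioi a, (p + q * x) * Real.exp (-(r * x))
      = ((p + q / r) / r + (q / r) * a) * Real.exp (-(r * a)) := by
  have hpos : ∀ x ∈ Ioi a,
      0 ≤ (r * ((p + q / r) / r) - q / r + r * (q / r) * x) * Real.exp (-(r * x)) := by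
    intro x hx
    rw [← congrFun (fun_eq_aux r p q hr) x]
    exact mul_nonneg (hpq x hx) (Real.exp_nonneg _)
  rw [fun_eq_aux r p q hr,
    integral_Ioi_of_hasDerivAt_of_nonneg'
      (g := fun x => -((p + q / r) / r + (q / r) * x) * Real.exp (-(r * x)))
      (fun x _ => hasDerivAt_aux r ((p + q / r) / r) (q / r) x) hpos
      (tendsto_aux r _ _ hr)]
  ring

lemma expMeasure_eq (r : ℝ) :
    expMeasure r
      = volume.withDensity (fun x => ((exponentialPDFReal r x).toNNReal : ℝ≥0∞)) := rfl

lemma pdfReal_eq (r x : ℝ) :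
    exponentialPDFReal r x = if 0 ≤ x then r * Real.exp (-(r * x)) else 0 := by
  rw [exponentialPDFReal, gammaPDFReal]
  simp only [rpow_one, Real.Gamma_one, div_one, sub_self, rpow_zero, mul_one]

lemma ae_ne_zero : ∀ᵐ x : ℝ ∂volume, x ≠ 0 := by
  have h : (volume : Measure ℝ) {0} = 0 := measure_singleton 0
  rw [ae_iff]
  convert h using 2
  ext x
  simp

lemma key_ae (r : ℝ) (hr : 0 < r) (g : ℝ → ℝ) :
    (fun x => ((exponentialPDFReal r x).toNNReal : ℝ) • g x)
      =ᵐ[volume] Set.indicator (Ioi 0) (fun x => g x * (r * Real.exp (-(r * x)))) := by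
  filter_upwards [ae_ne_zero] with x hx
  rcases lt_or_gt_of_ne hx with h | h
  · rw [pdfReal_eq, if_neg (by linarith), Set.indicator_of_notMem (by simpa using h.le)]
    simp
  · rw [pdfReal_eq, if_pos h.le, Set.indicator_of_mem (mem_Ioi.mpr h),
      Real.coe_toNNReal _ (by positivity), smul_eq_mul]
    ring

lemma meas_pdf (r : ℝ) : Measurable fun x => (exponentialPDFReal r x).toNNReal :=
  (measurable_exponentialPDFReal r).real_toNNReal

lemma integral_expMeasure (r : ℝ) (hr : 0 < r) (g : ℝ → ℝ) :
    ∫ x, g x ∂(expMeasure r) = ∫ x in Ioi 0, g x * (r * Real.exp (-(r * x))) := by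
  rw [expMeasure_eq, integral_withDensity_eq_integral_smul (meas_pdf r) g,
    ← integral_indicator measurableSet_Ioi]
  exact integral_congr_ae (key_ae r hr g)

lemma integrable_expMeasure (r : ℝ) (hr : 0 < r) {g : ℝ → ℝ}
    (h : IntegrableOn (fun x => g x * (r * Real.exp (-(r * x)))) (Ioi 0)) :
    Integrable g (expMeasure r) := by
  rw [expMeasure_eq, integrable_withDensity_iff_integrable_smul (meas_pdf r)]
  have h2 : Integrable (Set.indicator (Ioi 0) fun x => g x * (r * Real.exp (-(r * x)))) volume :=
    (integrable_indicator_iff measurableSet_Ioi).2 h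
  exact h2.congr (key_ae r hr g).symm

lemma ae_nonneg_expMeasure (r : ℝ) : ∀ᵐ x ∂(expMeasure r), 0 ≤ x := by
  have h : expMeasure r (Iio 0) = 0 := by
    rw [show expMeasure r = volume.withDensity (exponentialPDF r) from rfl,
      withDensity_apply _ measurableSet_Iio]
    exact lintegral_exponentialPDF_of_nonpos le_rfl
  rw [ae_iff]
  convert h using 2
  ext x
  simp [not_le]

lemma abs_decomp (a y : ℝ) : |a - y| = (a - y) + 2 * max (y - a) 0 := by
  rcases le_total y a with h | h
  · rw [abs_of_nonneg (by linarith), max_eq_right (by linarith)]; ring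
  · rw [abs_of_nonpos (by linarith), max_eq_left (by linarith)]; ring

lemma T1_int (r a : ℝ) (hr : 0 < r) (ha : 0 ≤ a) :
    IntegrableOn (fun y => (a - y) * (r * Real.exp (-(r * y)))) (Ioi 0) := by
  have h1 := integrableOn_aux r (a * r) 0 0 hr (fun x _ => by
    simp only [zero_mul, add_zero]; exact mul_nonneg ha hr.le)
  have h2 := integrableOn_aux r 0 r 0 hr (fun x hx => by
    have hx' := mem_Ioi.mp hx; nlinarith)
  exact (h1.sub h2).congr (ae_of_all _ fun y => by simp only [Pi.sub_apply]; ring)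

lemma T1_val (r a : ℝ) (hr : 0 < r) (ha : 0 ≤ a) :
    ∫ y in Ioi 0, (a - y) * (r * Real.exp (-(r * y))) = a - 1 / r := by
  have hp1 : ∀ x ∈ Ioi (0:ℝ), (0:ℝ) ≤ a * r + 0 * x := fun x _ => by
    simp only [zero_mul, add_zero]; exact mul_nonneg ha hr.le
  have hp2 : ∀ x ∈ Ioi (0:ℝ), (0:ℝ) ≤ 0 + r * x := fun x hx => by
    have hx' := mem_Ioi.mp hx; nlinarith
  have h1 := integrableOn_aux r (a * r) 0 0 hr hp1
  have h2 := integrableOn_aux r 0 r 0 hr hp2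
  have heq : ∀ y : ℝ, (a - y) * (r * Real.exp (-(r * y)))
      = (a * r + 0 * y) * Real.exp (-(r * y)) - (0 + r * y) * Real.exp (-(r * y)) := by
    intro y; ring
  rw [integral_congr_ae (ae_of_all _ heq), integral_sub h1 h2,
    integral_aux r (a * r) 0 0 hr hp1, integral_aux r 0 r 0 hr hp2]
  have hr' : r ≠ 0 := hr.ne'
  field_simp
  simp only [mul_zero, neg_zero, Real.exp_zero]
  ring

lemma T2_int_Ioi (r a : ℝ) (hr : 0 < r) :
    IntegrableOn (fun y => max (y - a) 0 * (r * Real.exp (-(r * y)))) (Ioi a) := by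
  have h := integrableOn_aux r (-(a * r)) r a hr (fun x hx => by
    have hx' := mem_Ioi.mp hx; nlinarith)
  refine h.congr_fun (fun y hy => ?_) measurableSet_Ioi
  have hy' : a ≤ y := (mem_Ioi.mp hy).le
  rw [max_eq_left (by linarith)]
  ring

lemma T2_int (r a : ℝ) (hr : 0 < r) (ha : 0 ≤ a) :
    IntegrableOn (fun y => max (y - a) 0 * (r * Real.exp (-(r * y)))) (Ioi 0) := by
  rw [← Ioc_union_Ioi_eq_Ioi ha]
  refine IntegrableOn.union ?_ (T2_int_Ioi r a hr)
  have heq : EqOn (fun _ : ℝ => (0 : ℝ))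
      (fun y => max (y - a) 0 * (r * Real.exp (-(r * y)))) (Ioc 0 a) := by
    intro y hy
    simp [max_eq_right (show y - a ≤ (0:ℝ) by linarith [hy.2])]
  exact (integrableOn_zero).congr_fun heq measurableSet_Ioc

lemma T2_val (r a : ℝ) (hr : 0 < r) (ha : 0 ≤ a) :
    ∫ y in Ioi 0, max (y - a) 0 * (r * Real.exp (-(r * y)))
      = Real.exp (-(r * a)) / r := by
  rw [← Ioc_union_Ioi_eq_Ioi ha,
    setIntegral_union (Ioc_disjoint_Ioi le_rfl) measurableSet_Ioi
      ((T2_int r a hr ha).mono_set (by rw [← Ioc_union_Ioi_eq_Ioi ha]; exact subset_union_left))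
      (T2_int_Ioi r a hr)]
  have h1 : ∫ y in Ioc 0 a, max (y - a) 0 * (r * Real.exp (-(r * y))) = 0 := by
    rw [setIntegral_congr_fun measurableSet_Ioc
      (g := fun _ => (0 : ℝ)) (fun y hy => by
        simp [max_eq_right (show y - a ≤ (0:ℝ) by linarith [hy.2])])]
    simp
  have h2 : ∫ y in Ioi a, max (y - a) 0 * (r * Real.exp (-(r * y)))
      = Real.exp (-(r * a)) / r := by
    rw [setIntegral_congr_fun measurableSet_Ioi
      (g := fun y => (-(a * r) + r * y) * Real.exp (-(r * y)))
      (fun y hy => by rw [max_eq_left (by linarith [mem_Ioi.mp hy])]; ring),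
      integral_aux r (-(a * r)) r a hr (fun x hx => by
        have hx' := mem_Ioi.mp hx; nlinarith)]
    have hr' : r ≠ 0 := hr.ne'
    field_simp
    ring
  rw [h1, h2, zero_add]

lemma absfun_decomp (r a : ℝ) : ∀ y : ℝ, |a - y| * (r * Real.exp (-(r * y)))
    = (a - y) * (r * Real.exp (-(r * y))) + 2 * (max (y - a) 0 * (r * Real.exp (-(r * y)))) := by
  intro y
  rw [abs_decomp a y]
  ring

lemma integrableOn_abs (r a : ℝ) (hr : 0 < r) (ha : 0 ≤ a) :
    IntegrableOn (fun y => |a - y| * (r * Real.exp (-(r * y)))) (Ioi 0) := by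
  have h := (T1_int r a hr ha).add ((T2_int r a hr ha).const_mul 2)
  exact h.congr (ae_of_all _ fun y => by
    simp only [Pi.add_apply]
    exact (absfun_decomp r a y).symm)

lemma integrable_abs_exp (r a : ℝ) (hr : 0 < r) (ha : 0 ≤ a) :
    Integrable (fun y => |a - y|) (expMeasure r) :=
  integrable_expMeasure r hr (integrableOn_abs r a hr ha)

lemma integral_abs_exp (r a : ℝ) (hr : 0 < r) (ha : 0 ≤ a) :
    ∫ y, |a - y| ∂(expMeasure r) = a - 1 / r + 2 * Real.exp (-(r * a)) / r := by
  rw [integral_expMeasure r hr, integral_congr_ae (ae_of_all _ (absfun_decomp r a)),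
    integral_add (T1_int r a hr ha) ((T2_int r a hr ha).const_mul 2),
    integral_const_mul, T1_val r a hr ha, T2_val r a hr ha]
  ring

end ExpAbsAux

open ExpAbsAux

theorem expected_abs_shifted_diff_exponential
    {Ω : Type*} [MeasurableSpace Ω] (μ : Measure Ω) [IsProbabilityMeasure μ]
    (lam1 lam2 : ℝ) (hlam1 : 0 < lam1) (hlam2 : 0 < lam2)
    (Δt : ℝ) (hΔt : 0 ≤ Δt)
    (X Y : Ω → ℝ) (hX : Measurable X) (hY : Measurable Y)
    (hindep : IndepFun X Y μ)
    (hXlaw : μ.map X = expMeasure lam1)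
    (hYlaw : μ.map Y = expMeasure lam2) :
    (∫ ω, |X ω + Δt - Y ω| ∂μ) =
      (1 / lam1 - 1 / lam2 + Δt) * (1 - 2 * Real.exp (-lam2 * Δt)) +
        2 * Real.exp (-lam2 * Δt) * (lam2 / (lam1 * (lam1 + lam2)) + Δt) := by
  haveI hP1 : IsProbabilityMeasure (expMeasure lam1) := isProbabilityMeasure_expMeasure hlam1
  haveI hP2 : IsProbabilityMeasure (expMeasure lam2) := isProbabilityMeasure_expMeasure hlam2
  have hmap : μ.map (fun ω => (X ω, Y ω)) = (expMeasure lam1).prod (expMeasure lam2) := by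
    rw [← hXlaw, ← hYlaw]
    exact (indepFun_iff_map_prod_eq_prod_map_map hX.aemeasurable hY.aemeasurable).mp hindep
  have hcontf : Continuous (fun p : ℝ × ℝ => |p.1 + Δt - p.2|) := by fun_prop
  have step1 : (∫ ω, |X ω + Δt - Y ω| ∂μ)
      = ∫ p, |p.1 + Δt - p.2| ∂((expMeasure lam1).prod (expMeasure lam2)) := by
    rw [← hmap, integral_map (hX.prodMk hY).aemeasurable hcontf.aestronglyMeasurable]
  have hinner : ∀ x : ℝ, 0 ≤ x →
      (∫ y, |x + Δt - y| ∂(expMeasure lam2))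
        = x + Δt - 1 / lam2 + 2 * Real.exp (-(lam2 * (x + Δt))) / lam2 := by
    intro x hx
    have h := integral_abs_exp lam2 (x + Δt) hlam2 (by linarith)
    rw [h]
  -- auxiliary integrability statements for the outer integral
  have hp1 : ∀ x ∈ Ioi (0:ℝ), (0:ℝ) ≤ Δt * lam1 + lam1 * x := fun x hx => by
    have hx' := mem_Ioi.mp hx; nlinarith
  have hp2 : ∀ x ∈ Ioi (0:ℝ), (0:ℝ) ≤ lam1 / lam2 + 0 * x := fun x _ => by
    simp only [zero_mul, add_zero]; positivity
  have hp3 : ∀ x ∈ Ioi (0:ℝ), (0:ℝ) ≤ 2 * lam1 * Real.exp (-(lam2 * Δt)) / lam2 + 0 * x :=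
    fun x _ => by simp only [zero_mul, add_zero]; positivity
  have hS1 := integrableOn_aux lam1 (Δt * lam1) lam1 0 hlam1 hp1
  have hS2 := integrableOn_aux lam1 (lam1 / lam2) 0 0 hlam1 hp2
  have hS3 := integrableOn_aux (lam1 + lam2)
    (2 * lam1 * Real.exp (-(lam2 * Δt)) / lam2) 0 0 (by linarith) hp3
  have heq : ∀ x : ℝ,
      (x + Δt - 1 / lam2 + 2 * Real.exp (-(lam2 * (x + Δt))) / lam2)
        * (lam1 * Real.exp (-(lam1 * x)))
      = ((Δt * lam1 + lam1 * x) * Real.exp (-(lam1 * x))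
          - (lam1 / lam2 + 0 * x) * Real.exp (-(lam1 * x)))
        + (2 * lam1 * Real.exp (-(lam2 * Δt)) / lam2 + 0 * x)
            * Real.exp (-((lam1 + lam2) * x)) := by
    intro x
    have hexp : Real.exp (-(lam2 * (x + Δt))) * Real.exp (-(lam1 * x))
        = Real.exp (-(lam2 * Δt)) * Real.exp (-((lam1 + lam2) * x)) := by
      rw [← Real.exp_add, ← Real.exp_add]
      congr 1
      ring
    calc (x + Δt - 1 / lam2 + 2 * Real.exp (-(lam2 * (x + Δt))) / lam2)
        * (lam1 * Real.exp (-(lam1 * x)))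
        = (x + Δt) * (lam1 * Real.exp (-(lam1 * x)))
            - (1 / lam2) * (lam1 * Real.exp (-(lam1 * x)))
            + (2 * lam1 / lam2)
              * (Real.exp (-(lam2 * (x + Δt))) * Real.exp (-(lam1 * x))) := by ring
      _ = _ := by rw [hexp]; ring
  have houterOn : IntegrableOn
      (fun x => (x + Δt - 1 / lam2 + 2 * Real.exp (-(lam2 * (x + Δt))) / lam2)
        * (lam1 * Real.exp (-(lam1 * x)))) (Ioi 0) := by
    exact ((hS1.sub hS2).add hS3).congr (ae_of_all _ fun x => by
      simp only [Pi.add_apply, Pi.sub_apply]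
      exact (heq x).symm)
  have houter : Integrable
      (fun x => x + Δt - 1 / lam2 + 2 * Real.exp (-(lam2 * (x + Δt))) / lam2)
      (expMeasure lam1) := integrable_expMeasure lam1 hlam1 houterOn
  have hint : Integrable (fun p : ℝ × ℝ => |p.1 + Δt - p.2|)
      ((expMeasure lam1).prod (expMeasure lam2)) := by
    rw [integrable_prod_iff hcontf.aestronglyMeasurable]
    constructor
    · filter_upwards [ae_nonneg_expMeasure lam1] with x hx
      exact integrable_abs_exp lam2 (x + Δt) hlam2 (by linarith)
    · refine houter.congr ?_
      filter_upwards [ae_nonneg_expMeasure lam1] with x hx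
      rw [← hinner x hx]
      refine (integral_congr_ae (ae_of_all _ fun y => ?_)).symm
      rw [Real.norm_eq_abs, abs_abs]
  rw [step1, integral_prod _ hint]
  have hcongr : (fun x => ∫ y, |x + Δt - y| ∂(expMeasure lam2))
      =ᵐ[expMeasure lam1]
      (fun x => x + Δt - 1 / lam2 + 2 * Real.exp (-(lam2 * (x + Δt))) / lam2) := by
    filter_upwards [ae_nonneg_expMeasure lam1] with x hx
    exact hinner x hx
  rw [integral_congr_ae hcongr, integral_expMeasure lam1 hlam1,
    integral_congr_ae (ae_of_all _ heq),
    integral_add (show IntegrableOn (fun x => (Δt * lam1 + lam1 * x) * Real.exp (-(lam1 * x))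
        - (lam1 / lam2 + 0 * x) * Real.exp (-(lam1 * x))) (Ioi 0) volume from hS1.sub hS2) hS3,
    integral_sub hS1 hS2,
    integral_aux lam1 (Δt * lam1) lam1 0 hlam1 hp1,
    integral_aux lam1 (lam1 / lam2) 0 0 hlam1 hp2,
    integral_aux (lam1 + lam2) (2 * lam1 * Real.exp (-(lam2 * Δt)) / lam2) 0 0
      (by linarith) hp3]
  have h12 : lam1 + lam2 ≠ 0 := by positivity
  have hl1 : lam1 ≠ 0 := hlam1.ne'
  have hl2 : lam2 ≠ 0 := hlam2.ne'
  rw [show -lam2 * Δt = -(lam2 * Δt) by ring]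
  simp only [mul_zero, zero_mul, add_zero, zero_div, zero_add, neg_zero, Real.exp_zero, mul_one]
  field_simp
  ring
end

section
/- Let λ1, λ2 > 0 and let k, l ≥ 1 be integers. Let X and Y be independent real random variables, where X has the Gamma distribution with shape k and rate λ1 and Y has the Gamma distribution with shape l and rate λ2. Then lim_{Δt→+∞} ( E[|X + Δt − Y|] − (k/λ1 − l/λ2 + Δt) ) = 0. -/
open MeasureTheory ProbabilityTheory Filter Real
open scoped ENNReal NNReal

lemma gamma_mul_pdf {a r : ℝ} (ha : 0 < a) (hr : 0 < r) (x : ℝ) :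
    x * gammaPDFReal a r x = (a / r) * gammaPDFReal (a + 1) r x := by
  unfold gammaPDFReal
  rcases le_or_gt 0 x with hx | hx
  · simp only [if_pos hx]
    rcases eq_or_lt_of_le hx with h0 | h0
    · rw [← h0]
      rw [Real.zero_rpow (by linarith : a + 1 - 1 ≠ 0)]
      ring
    · have hΓ : Real.Gamma (a + 1) = a * Real.Gamma a := Real.Gamma_add_one ha.ne'
      have hrpow : r ^ (a + 1) = r ^ a * r := Real.rpow_add_one hr.ne' a
      have hxpow : x ^ (a + 1 - 1) = x ^ (a - 1) * x := by
        rw [show a + 1 - 1 = (a - 1) + 1 by ring, Real.rpow_add_one h0.ne' (a - 1)]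
      have hΓpos : 0 < Real.Gamma a := Real.Gamma_pos_of_pos ha
      rw [hΓ, hrpow, hxpow]
      field_simp
  · simp only [if_neg (not_le.mpr hx), mul_zero]

lemma integrable_gammaPDFReal {a r : ℝ} (ha : 0 < a) (hr : 0 < r) :
    Integrable (gammaPDFReal a r) := by
  refine ⟨(measurable_gammaPDFReal a r).aestronglyMeasurable, ?_⟩
  rw [hasFiniteIntegral_iff_ofReal (ae_of_all _ (gammaPDFReal_nonneg ha hr))]
  have : ∫⁻ x, ENNReal.ofReal (gammaPDFReal a r x) = 1 := lintegral_gammaPDF_eq_one ha hr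
  rw [this]; exact ENNReal.one_lt_top

lemma integral_gammaPDFReal_eq_one {a r : ℝ} (ha : 0 < a) (hr : 0 < r) :
    ∫ x, gammaPDFReal a r x = 1 := by
  rw [integral_eq_lintegral_of_nonneg_ae (ae_of_all _ (gammaPDFReal_nonneg ha hr))
    (measurable_gammaPDFReal a r).aestronglyMeasurable]
  have h := lintegral_gammaPDF_eq_one ha hr
  simp only [gammaPDF] at h
  rw [h]
  simp

lemma gammaMeasure_eq_withDensity_nnreal {a r : ℝ} :
    gammaMeasure a r
      = volume.withDensity (fun x => ((gammaPDFReal a r x).toNNReal : ℝ≥0∞)) := by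
  unfold gammaMeasure gammaPDF
  congr 1

lemma integral_id_gammaMeasure {a r : ℝ} (ha : 0 < a) (hr : 0 < r) :
    ∫ x, x ∂(gammaMeasure a r) = a / r := by
  rw [gammaMeasure_eq_withDensity_nnreal,
    integral_withDensity_eq_integral_smul (measurable_gammaPDFReal a r).real_toNNReal]
  have : ∀ x : ℝ, (gammaPDFReal a r x).toNNReal • x
      = (a / r) * gammaPDFReal (a + 1) r x := by
    intro x
    rw [NNReal.smul_def, smul_eq_mul, Real.coe_toNNReal _ (gammaPDFReal_nonneg ha hr x),
      mul_comm]
    exact gamma_mul_pdf ha hr x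
  rw [integral_congr_ae (ae_of_all _ this), integral_const_mul,
    integral_gammaPDFReal_eq_one (by linarith) hr, mul_one]

lemma integrable_id_gammaMeasure {a r : ℝ} (ha : 0 < a) (hr : 0 < r) :
    Integrable (fun x : ℝ => x) (gammaMeasure a r) := by
  unfold gammaMeasure gammaPDF
  rw [integrable_withDensity_iff ((measurable_gammaPDFReal a r).ennreal_ofReal) (ae_of_all _ (fun x => ENNReal.ofReal_lt_top))]
  have : ∀ x : ℝ, x * (ENNReal.ofReal (gammaPDFReal a r x)).toReal
      = (a / r) * gammaPDFReal (a + 1) r x := by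
    intro x
    rw [ENNReal.toReal_ofReal (gammaPDFReal_nonneg ha hr x)]
    exact gamma_mul_pdf ha hr x
  rw [show (fun x : ℝ => x * (ENNReal.ofReal (gammaPDFReal a r x)).toReal)
      = fun x => (a / r) * gammaPDFReal (a + 1) r x from funext this]
  exact (integrable_gammaPDFReal (by linarith) hr).const_mul _

theorem tendsto_expected_abs_shifted_diff_atTop
    {Ω : Type*} [MeasurableSpace Ω] (μ : Measure Ω) [IsProbabilityMeasure μ]
    (lam1 lam2 : ℝ) (hlam1 : 0 < lam1) (hlam2 : 0 < lam2)
    (k l : ℕ) (hk : 1 ≤ k) (hl : 1 ≤ l)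
    (X Y : Ω → ℝ) (hX : Measurable X) (hY : Measurable Y)
    (hindep : IndepFun X Y μ)
    (hXlaw : μ.map X = gammaMeasure k lam1)
    (hYlaw : μ.map Y = gammaMeasure l lam2) :
    Tendsto (fun Δt : ℝ =>
        (∫ ω, |X ω + Δt - Y ω| ∂μ) - ((k : ℝ) / lam1 - (l : ℝ) / lam2 + Δt))
      atTop (nhds 0) := by
  have hka : (0 : ℝ) < (k : ℝ) := by exact_mod_cast Nat.lt_of_lt_of_le Nat.zero_lt_one hk
  have hla : (0 : ℝ) < (l : ℝ) := by exact_mod_cast Nat.lt_of_lt_of_le Nat.zero_lt_one hl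
  -- integrability of X and Y
  have hXint : Integrable X μ := by
    have := (integrable_map_measure aestronglyMeasurable_id hX.aemeasurable).mp
      (by rw [hXlaw]; exact integrable_id_gammaMeasure hka hlam1)
    simpa using this
  have hYint : Integrable Y μ := by
    have := (integrable_map_measure aestronglyMeasurable_id hY.aemeasurable).mp
      (by rw [hYlaw]; exact integrable_id_gammaMeasure hla hlam2)
    simpa using this
  -- means
  have hEX : ∫ ω, X ω ∂μ = (k : ℝ) / lam1 := by
    have := integral_map hX.aemeasurable (aestronglyMeasurable_id (μ := μ.map X))
    rw [hXlaw] at this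
    simpa [integral_id_gammaMeasure hka hlam1] using this.symm
  have hEY : ∫ ω, Y ω ∂μ = (l : ℝ) / lam2 := by
    have := integral_map hY.aemeasurable (aestronglyMeasurable_id (μ := μ.map Y))
    rw [hYlaw] at this
    simpa [integral_id_gammaMeasure hla hlam2] using this.symm
  set Z : Ω → ℝ := fun ω => X ω - Y ω with hZdef
  have hZmeas : Measurable Z := hX.sub hY
  have hZint : Integrable Z μ := hXint.sub hYint
  have hEZ : ∫ ω, Z ω ∂μ = (k : ℝ) / lam1 - (l : ℝ) / lam2 := by
    rw [hZdef]; rw [integral_sub hXint hYint, hEX, hEY]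
  -- rewrite the function
  have key : ∀ Δt : ℝ,
      (∫ ω, |X ω + Δt - Y ω| ∂μ) - ((k : ℝ) / lam1 - (l : ℝ) / lam2 + Δt)
        = ∫ ω, (|Z ω + Δt| - (Z ω + Δt)) ∂μ := by
    intro Δt
    have h1 : Integrable (fun ω => |Z ω + Δt|) μ := (hZint.add (integrable_const Δt)).abs
    have h2 : Integrable (fun ω => Z ω + Δt) μ := hZint.add (integrable_const Δt)
    rw [integral_sub h1 h2, integral_add hZint (integrable_const Δt), hEZ, integral_const]
    have : ∀ ω, |X ω + Δt - Y ω| = |Z ω + Δt| := by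
      intro ω; rw [hZdef]; ring_nf
    rw [integral_congr_ae (ae_of_all _ this)]
    simp [measure_univ]
  rw [show (fun Δt : ℝ =>
      (∫ ω, |X ω + Δt - Y ω| ∂μ) - ((k : ℝ) / lam1 - (l : ℝ) / lam2 + Δt))
      = fun Δt => ∫ ω, (|Z ω + Δt| - (Z ω + Δt)) ∂μ from funext key]
  have h0 : (0 : ℝ) = ∫ ω, (0 : ℝ) ∂μ := by simp
  rw [h0]
  apply tendsto_integral_filter_of_dominated_convergence (fun ω => 2 * |Z ω|)
  · exact Eventually.of_forall fun Δt =>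
      ((hZmeas.add_const Δt).abs.sub (hZmeas.add_const Δt)).aestronglyMeasurable
  · filter_upwards [eventually_ge_atTop (0 : ℝ)] with Δt hΔt
    refine ae_of_all _ fun ω => ?_
    have h1 := abs_nonneg (Z ω)
    have h2 := neg_abs_le (Z ω)
    have h3 := le_abs_self (Z ω + Δt)
    rcases le_or_gt 0 (Z ω + Δt) with h | h
    · rw [Real.norm_eq_abs, abs_of_nonneg (by linarith [abs_of_nonneg h] : (0:ℝ) ≤ |Z ω + Δt| - (Z ω + Δt))]
      rw [abs_of_nonneg h]; linarith
    · rw [Real.norm_eq_abs, abs_of_nonneg (by linarith : (0:ℝ) ≤ |Z ω + Δt| - (Z ω + Δt)),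
        abs_of_neg h]
      linarith
  · exact hZint.abs.const_mul 2
  · refine ae_of_all _ fun ω => ?_
    have : ∀ᶠ Δt in atTop, |Z ω + Δt| - (Z ω + Δt) = 0 := by
      filter_upwards [eventually_ge_atTop (-(Z ω))] with Δt hΔt
      rw [abs_of_nonneg (by linarith), sub_self]
    exact Tendsto.congr' (this.mono fun Δt h => h.symm) tendsto_const_nhds
end
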